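/- arXiv:1501.06955 — 3 statements merged into one kernel-verified Lean document; each statement's English description precedes it below -/
import Mathlib

section
/- Let n ≥ 3 and let F be the Fibonacci function on the set 𝒜 of alternating geodesics of the Cayley tree Δ of Γₙ, relative to the root v₀. For every real number s > n − 1, the infinite sum ∑_{γ∈𝒜} F(γ)^{−s} converges. -/
open scoped BigOperators

noncomputable section

namespace MarkoffHurwitz

/-- The Markoff–Hurwitz polynomial `H(x) = x₁² + ⋯ + xₙ² − x₁⋯xₙ`. -/
def MH (n : ℕ) (x : Fin n → ℂ) : ℂ := (∑ i, x i ^ 2) - ∏ i, x i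

/-- The involution `bᵢ` replacing `xᵢ` by `(∏_{j≠i} x_j) − xᵢ`. -/
def bmap (n : ℕ) (i : Fin n) (x : Fin n → ℂ) : Fin n → ℂ :=
  Function.update x i ((∏ j ∈ Finset.univ.erase i, x j) - x i)

lemma bmap_apply_ne (n : ℕ) (i : Fin n) (x : Fin n → ℂ) {j : Fin n} (h : j ≠ i) :
    bmap n i x j = x j := Function.update_of_ne h _ _

lemma bmap_apply_same (n : ℕ) (i : Fin n) (x : Fin n → ℂ) :
    bmap n i x i = (∏ j ∈ Finset.univ.erase i, x j) - x i := Function.update_self _ _ _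

lemma prod_erase_bmap (n : ℕ) (i : Fin n) (x : Fin n → ℂ) :
    ∏ j ∈ Finset.univ.erase i, bmap n i x j = ∏ j ∈ Finset.univ.erase i, x j :=
  Finset.prod_congr rfl fun j hj => bmap_apply_ne n i x (Finset.ne_of_mem_erase hj)

lemma bmap_involutive (n : ℕ) (i : Fin n) : Function.Involutive (bmap n i) := by
  intro x; funext j
  rcases eq_or_ne j i with rfl | h
  · rw [bmap_apply_same, prod_erase_bmap, bmap_apply_same]; ring
  · rw [bmap_apply_ne n i _ h, bmap_apply_ne n i x h]

/-- The relators `bᵢ²` of the Coxeter presentation. -/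
def MHrels (n : ℕ) : Set (FreeGroup (Fin n)) :=
  Set.range fun i : Fin n => FreeGroup.of i * FreeGroup.of i

/-- The group `Γₙ = ⟨b₁,…,bₙ ∣ bᵢ² = 1⟩`, free product of `n` copies of `ℤ/2`. -/
abbrev Gam (n : ℕ) := PresentedGroup (MHrels n)

/-- The generator `bᵢ` as an element of `Γₙ`. -/
def gen {n : ℕ} (i : Fin n) : Gam n := PresentedGroup.of i

lemma gen_mul_self {n : ℕ} (i : Fin n) : gen i * gen i = 1 := by
  have h : PresentedGroup.mk (MHrels n) (FreeGroup.of i * FreeGroup.of i) = 1 := by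
    have : (FreeGroup.of i * FreeGroup.of i) ∈ Subgroup.normalClosure (MHrels n) :=
      Subgroup.subset_normalClosure ⟨i, rfl⟩
    exact (QuotientGroup.eq_one_iff _).2 this
  simpa [gen, PresentedGroup.of, map_mul] using h

lemma gen_inv {n : ℕ} (i : Fin n) : (gen i)⁻¹ = gen i :=
  inv_eq_of_mul_eq_one_right (gen_mul_self i)

/-- `bᵢ` as a permutation of `ℂⁿ`. -/
def bperm (n : ℕ) (i : Fin n) : Equiv.Perm (Fin n → ℂ) := (bmap_involutive n i).toPerm

/-- The action of `Γₙ` on `ℂⁿ` by the involutions `bᵢ`. -/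
def act (n : ℕ) : Gam n →* Equiv.Perm (Fin n → ℂ) :=
  PresentedGroup.toGroup (f := fun i => bperm n i) (by
    rintro r ⟨i, rfl⟩
    rw [map_mul, FreeGroup.lift_apply_of]
    refine Equiv.ext fun x => ?_
    simpa [bperm, Equiv.Perm.mul_apply] using bmap_involutive n i x)

lemma act_gen (n : ℕ) (i : Fin n) : act n (gen i) = bperm n i :=
  PresentedGroup.toGroup.of _

/-- The subgroup `⟨bᵢ, b_j⟩` associated to an unordered pair `{i,j}`. -/
def pairSub {n : ℕ} : Sym2 (Fin n) → Subgroup (Gam n) :=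
  Sym2.lift ⟨fun i j => Subgroup.closure {gen i, gen j}, fun i j => by
    show Subgroup.closure {gen i, gen j} = Subgroup.closure {gen j, gen i}
    rw [Set.pair_comm]⟩

lemma pairSub_mk {n : ℕ} (i j : Fin n) :
    pairSub s(i, j) = Subgroup.closure {gen i, gen j} := rfl

/-- An alternating geodesic in the Cayley tree of `Γₙ`: an unordered pair `{i,j}`
of distinct colors together with a coset `g⟨bᵢ,b_j⟩`. -/
structure AltGeo (n : ℕ) where
  pair : Sym2 (Fin n)
  nd : ¬ pair.IsDiag
  coset : Gam n ⧸ pairSub pair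

/-- Coordinates outside of a pair `{i,j}`. -/
def offPair {n : ℕ} (s : Sym2 (Fin n)) : Finset (Fin n) :=
  Finset.univ.filter fun k => ¬ k ∈ s

/-- Key invariance: the coordinates off the pair do not change when moving along the coset. -/
lemma coords_eq {n : ℕ} (a : Fin n → ℂ) (s : Sym2 (Fin n)) {t : Gam n}
    (ht : t ∈ pairSub s) (g : Gam n) {k : Fin n} (hk : ¬ k ∈ s) :
    act n (g * t)⁻¹ a k = act n g⁻¹ a k := by
  induction s using Sym2.ind with
  | _ i j =>
    rw [pairSub_mk] at ht
    induction ht using Subgroup.closure_induction generalizing g with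
    | mem x hx =>
      have key : ∀ m : Fin n, m ∈ (s(i, j) : Sym2 (Fin n)) → ∀ g : Gam n,
          act n (g * gen m)⁻¹ a k = act n g⁻¹ a k := by
        intro m hm g
        rw [mul_inv_rev, gen_inv, map_mul, Equiv.Perm.mul_apply, act_gen]
        have hkm : k ≠ m := fun h => hk (h ▸ hm)
        exact bmap_apply_ne n m _ hkm
      rcases hx with rfl | rfl
      · exact key i (Sym2.mem_mk_left i j) g
      · exact key j (Sym2.mem_mk_right i j) g
    | one => rw [mul_one]
    | mul x y hx hy ihx ihy => rw [← mul_assoc]; rw [ihy, ihx]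
    | inv x hx ih =>
      have := ih (g := g * x⁻¹)
      rw [mul_assoc, inv_mul_cancel, mul_one] at this
      exact this.symm

/-- Representative version of the extended Hurwitz map. -/
def phiRep (n : ℕ) (a : Fin n → ℂ) (s : Sym2 (Fin n)) (g : Gam n) : ℂ :=
  ∏ k ∈ offPair s, act n g⁻¹ a k

/-- Representative version of the square sum weight. -/
def sigRep (n : ℕ) (a : Fin n → ℂ) (s : Sym2 (Fin n)) (g : Gam n) : ℂ :=
  ∑ k ∈ offPair s, (act n g⁻¹ a k) ^ 2

/-- The extended Hurwitz map `φ_a : 𝒜 → ℂ`, `φ(γ) = ∏_{k∉{i,j}} x_k`. -/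
def phiA (n : ℕ) (a : Fin n → ℂ) (γ : AltGeo n) : ℂ :=
  Quotient.liftOn' γ.coset (phiRep n a γ.pair) (by
    intro g h hgh
    have hmem : g⁻¹ * h ∈ pairSub γ.pair := QuotientGroup.leftRel_apply.mp hgh
    have : h = g * (g⁻¹ * h) := by group
    rw [this]
    unfold phiRep
    exact (Finset.prod_congr rfl fun k hk =>
      (coords_eq a γ.pair hmem g (Finset.mem_filter.mp hk).2)).symm)

/-- The square sum weight `σ_a : 𝒜 → ℂ`, `σ(γ) = ∑_{k∉{i,j}} x_k²`. -/
def sigA (n : ℕ) (a : Fin n → ℂ) (γ : AltGeo n) : ℂ :=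
  Quotient.liftOn' γ.coset (sigRep n a γ.pair) (by
    intro g h hgh
    have hmem : g⁻¹ * h ∈ pairSub γ.pair := QuotientGroup.leftRel_apply.mp hgh
    have : h = g * (g⁻¹ * h) := by group
    rw [this]
    unfold sigRep
    exact (Finset.sum_congr rfl fun k hk => by
      rw [coords_eq a γ.pair hmem g (Finset.mem_filter.mp hk).2]).symm)

/-- The set `𝒜_φ(K)` of alternating geodesics with `|φ(γ)| ≤ K`. -/
def AK (n : ℕ) (a : Fin n → ℂ) (K : ℝ) : Set (AltGeo n) :=
  {γ | ‖phiA n a γ‖ ≤ K}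

/-- The Bowditch domain `𝒟 ⊆ ℂⁿ`. -/
def BD (n : ℕ) : Set (Fin n → ℂ) :=
  {a | (∀ γ : AltGeo n, phiA n a γ ∉ (fun r : ℝ => (r : ℂ)) '' Set.Icc (-2 : ℝ) 2) ∧
    ∃ K : ℝ, 2 < K ∧ (AK n a K).Finite}



/-- Word length of `g ∈ Γₙ` with respect to the generators `b₁,…,bₙ`. -/
def glen (n : ℕ) (g : Gam n) : ℕ :=
  sInf {m | ∃ l : List (Fin n), l.length = m ∧ g = (l.map gen).prod}

/-- The alternating geodesic `[g;{i,k}]` through the vertex `g` with colors `{i,k}`. -/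
def mkGeo {n : ℕ} (i k : Fin n) (h : i ≠ k) (g : Gam n) : AltGeo n :=
  ⟨s(i, k), by rwa [Sym2.mk_isDiag_iff], QuotientGroup.mk g⟩

/-- `F : 𝒜 → ℕ` is the Fibonacci function relative to the root `v₀ = 1`:
`F(γ) = 1` if the root lies on `γ`, and otherwise `F(γ) = F([v*;{i,k}]) + F([v*;{j,k}])`,
where `v*` is the vertex of `γ` closest to the root and `k` is the label of the first
edge of the geodesic from `v*` to the root. -/
def IsFib (n : ℕ) (F : AltGeo n → ℕ) : Prop :=
  (∀ γ : AltGeo n, γ.coset = QuotientGroup.mk 1 → F γ = 1) ∧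
  (∀ γ : AltGeo n, γ.coset ≠ QuotientGroup.mk 1 →
    ∀ g : Gam n, QuotientGroup.mk g = γ.coset →
      (∀ h : Gam n, QuotientGroup.mk h = γ.coset → glen n g ≤ glen n h) →
      ∀ i j k : Fin n, γ.pair = s(i, j) → ∀ (hki : k ≠ i) (hkj : k ≠ j),
        glen n (g * gen k) < glen n g →
        F γ = F (mkGeo i k hki.symm g) + F (mkGeo j k hkj.symm g))

/-- `log⁺ t = max (0, log t)`. -/
def logp (t : ℝ) : ℝ := max 0 (Real.log t)

/-- The subgroup `⟨b_j : j ≠ i⟩`. -/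
def hatSub (n : ℕ) (i : Fin n) : Subgroup (Gam n) :=
  Subgroup.closure {g | ∃ j : Fin n, j ≠ i ∧ g = gen j}

lemma coord_eq (n : ℕ) (a : Fin n → ℂ) (i : Fin n) {t : Gam n}
    (ht : t ∈ hatSub n i) (g : Gam n) :
    act n (g * t)⁻¹ a i = act n g⁻¹ a i := by
  induction ht using Subgroup.closure_induction generalizing g with
  | mem x hx =>
    obtain ⟨j, hji, rfl⟩ := hx
    rw [mul_inv_rev, gen_inv, map_mul, Equiv.Perm.mul_apply, act_gen]
    exact bmap_apply_ne n j _ hji.symm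
  | one => rw [mul_one]
  | mul x y hx hy ihx ihy => rw [← mul_assoc, ihy, ihx]
  | inv x hx ih =>
    have := ih (g := g * x⁻¹)
    rw [mul_assoc, inv_mul_cancel, mul_one] at this
    exact this.symm

/-- For a coset `X = g⟨b_j : j ≠ i⟩ ∈ 𝒳ᵢ`, the (constant) `i`-th coordinate `φ(X)`. -/
def coordX (n : ℕ) (a : Fin n → ℂ) (i : Fin n) (X : Gam n ⧸ hatSub n i) : ℂ :=
  Quotient.liftOn' X (fun g => act n g⁻¹ a i) (by
    intro g h hgh
    have hmem : g⁻¹ * h ∈ hatSub n i := QuotientGroup.leftRel_apply.mp hgh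
    have hh : h = g * (g⁻¹ * h) := by group
    show act n g⁻¹ a i = act n h⁻¹ a i
    rw [hh, coord_eq n a i hmem g])

/-- `a ∈ ℂⁿ` is dihedral if some point of its `Γₙ`-orbit has two vanishing coordinates. -/
def Dihedral (n : ℕ) (a : Fin n → ℂ) : Prop :=
  ∃ (g : Gam n) (i j : Fin n), i ≠ j ∧ act n g a i = 0 ∧ act n g a j = 0

/-- The alternating geodesic `γ` contains the edge of color `i` incident to the vertex `g`. -/
def containsEdge {n : ℕ} (γ : AltGeo n) (g : Gam n) (i : Fin n) : Prop :=
  i ∈ γ.pair ∧ (QuotientGroup.mk g : Gam n ⧸ pairSub γ.pair) = γ.coset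

/-- Two alternating geodesics share an edge of the tree. -/
def ShareEdge {n : ℕ} (α β : AltGeo n) : Prop :=
  ∃ (g : Gam n) (i : Fin n), containsEdge α g i ∧ containsEdge β g i

/-- A set of alternating geodesics is edge-connected. -/
def EdgeConnected {n : ℕ} (P : Set (AltGeo n)) : Prop :=
  ∀ α ∈ P, ∀ β ∈ P, ∃ (m : ℕ) (c : ℕ → AltGeo n),
    c 0 = α ∧ c m = β ∧ (∀ t ≤ m, c t ∈ P) ∧ ∀ t < m, ShareEdge (c t) (c (t + 1))

/-- `h(z) = 1 − √(1 − 4/z²)`, with the principal square root (positive real part). -/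
def hfun (z : ℂ) : ℂ := 1 - (1 - 4 / z ^ 2) ^ ((1 : ℂ) / 2)

section Words

variable {n : ℕ}

/-- Reduced words: lists of colors with no two adjacent letters equal. -/
def RW (n : ℕ) := {l : List (Fin n) // l.IsChain (· ≠ ·)}

def tauList (k : Fin n) : List (Fin n) → List (Fin n)
  | [] => [k]
  | a :: t => if a = k then t else k :: a :: t

lemma tauList_chain' (k : Fin n) {l : List (Fin n)} (hl : l.IsChain (· ≠ ·)) :
    (tauList k l).IsChain (· ≠ ·) := by
  cases l with
  | nil => simp [tauList]
  | cons a t =>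
    by_cases h : a = k
    · simpa [tauList, h] using hl.tail
    · simpa [tauList, h, List.isChain_cons_cons] using ⟨Ne.symm h, hl⟩

def tauRW (k : Fin n) (r : RW n) : RW n := ⟨tauList k r.1, tauList_chain' k r.2⟩

lemma tauRW_involutive (k : Fin n) : Function.Involutive (tauRW k) := by
  rintro ⟨l, hl⟩
  cases l with
  | nil => simp [tauRW, tauList]; rfl
  | cons a t =>
    by_cases h : a = k
    · subst h
      cases t with
      | nil => simp [tauRW, tauList]; rfl
      | cons b u =>
        have hba : b ≠ a := (List.isChain_cons_cons.1 hl).1.symm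
        simp [tauRW, tauList, hba]; rfl
    · simp [tauRW, tauList, h]; rfl

/-- The action of `Γₙ` on reduced words. -/
def rho (n : ℕ) : Gam n →* Equiv.Perm (RW n) :=
  PresentedGroup.toGroup (f := fun i => (tauRW_involutive i).toPerm) (by
    rintro r ⟨i, rfl⟩
    rw [map_mul, FreeGroup.lift_apply_of]
    refine Equiv.ext fun x => ?_
    simpa [Equiv.Perm.mul_apply] using tauRW_involutive i x)

lemma rho_gen (k : Fin n) : rho n (gen k) = (tauRW_involutive k).toPerm :=
  PresentedGroup.toGroup.of _

def nilRW (n : ℕ) : RW n := ⟨[], List.isChain_nil⟩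

/-- The normal form (reduced word) of a group element. -/
def wd (g : Gam n) : List (Fin n) := (rho n g (nilRW n)).1

lemma wd_chain' (g : Gam n) : (wd g).IsChain (· ≠ ·) := (rho n g (nilRW n)).2

lemma rho_prod_reduced : ∀ {l : List (Fin n)}, l.IsChain (· ≠ ·) →
    (rho n (l.map gen).prod (nilRW n)).1 = l := by
  intro l
  induction l with
  | nil => intro h; simp [nilRW]; rfl
  | cons a t ih =>
    intro h
    have ht : t.IsChain (· ≠ ·) := h.tail
    have : rho n ((a :: t).map gen).prod = rho n (gen a) * rho n (t.map gen).prod := by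
      simp [map_mul]
    rw [this, Equiv.Perm.mul_apply, rho_gen]
    show (tauRW a _).1 = _
    have hval : (rho n (List.map gen t).prod (nilRW n)) = ⟨t, ht⟩ := Subtype.ext (ih ht)
    rw [hval]
    cases t with
    | nil => rfl
    | cons b u =>
      have hba : b ≠ a := (List.isChain_cons_cons.1 h).1.symm
      simp [tauRW, tauList, hba]

lemma wd_prod_reduced {l : List (Fin n)} (h : l.IsChain (· ≠ ·)) :
    wd ((l.map gen).prod : Gam n) = l := rho_prod_reduced h

lemma exists_word (g : Gam n) : ∃ l : List (Fin n), (l.map gen).prod = g := by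
  obtain ⟨x, rfl⟩ := PresentedGroup.mk_surjective (rels := MHrels n) g
  induction x using FreeGroup.induction_on with
  | C1 => exact ⟨[], rfl⟩
  | of i => exact ⟨[i], by simp; rfl⟩
  | inv_of i _ =>
      refine ⟨[i], ?_⟩
      have h1 : (PresentedGroup.mk (MHrels n)) (FreeGroup.of i) = gen i := rfl
      simp only [List.map, List.prod_cons, List.prod_nil, mul_one, map_inv, h1, gen_inv]

  | mul x y hx hy =>
      obtain ⟨lx, hlx⟩ := hx
      obtain ⟨ly, hly⟩ := hy
      exact ⟨lx ++ ly, by rw [List.map_append, List.prod_append, hlx, hly, map_mul]⟩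

lemma prod_tauRW (k : Fin n) (r : RW n) :
    ((tauRW k r).1.map gen).prod = gen k * (r.1.map gen).prod := by
  obtain ⟨l, hl⟩ := r
  cases l with
  | nil => simp [tauRW, tauList]
  | cons a t =>
    by_cases h : a = k
    · subst h
      simp [tauRW, tauList, ← mul_assoc, gen_mul_self]
    · simp [tauRW, tauList, h]

lemma prod_rho_aux : ∀ (l : List (Fin n)) (r : RW n),
    ((rho n (l.map gen).prod r).1.map gen).prod = (l.map gen).prod * (r.1.map gen).prod := by
  intro l
  induction l with
  | nil => intro r; simp
  | cons a t ih =>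
    intro r
    have : rho n ((a :: t).map gen).prod = rho n (gen a) * rho n (t.map gen).prod := by
      simp [map_mul]
    rw [this, Equiv.Perm.mul_apply, rho_gen]
    show ((tauRW a _).1.map gen).prod = _
    rw [prod_tauRW, ih]
    simp [mul_assoc]

lemma prod_wd (g : Gam n) : ((wd g).map gen).prod = g := by
  obtain ⟨l, rfl⟩ := exists_word g
  unfold wd
  rw [prod_rho_aux]
  simp [nilRW]

lemma wd_one : wd (1 : Gam n) = [] := by
  have := wd_prod_reduced (n := n) (l := []) List.isChain_nil
  simpa using this

lemma wd_eq_nil_iff {g : Gam n} : wd g = [] ↔ g = 1 := by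
  constructor
  · intro h
    have := prod_wd g
    rw [h] at this
    simpa using this.symm
  · rintro rfl; exact wd_one

lemma length_rho_le : ∀ (l : List (Fin n)) (r : RW n),
    (rho n (l.map gen).prod r).1.length ≤ l.length + r.1.length := by
  intro l
  induction l with
  | nil => intro r; simp
  | cons a t ih =>
    intro r
    have h1 : rho n ((a :: t).map gen).prod = rho n (gen a) * rho n (t.map gen).prod := by
      simp [map_mul]
    rw [h1, Equiv.Perm.mul_apply, rho_gen]
    show (tauRW a _).1.length ≤ _
    have h2 := ih r
    have : ∀ r' : RW n, (tauRW a r').1.length ≤ r'.1.length + 1 := by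
      rintro ⟨l', hl'⟩
      cases l' with
      | nil => simp [tauRW, tauList]
      | cons b u =>
        by_cases h : b = a <;> simp [tauRW, tauList, h] <;> omega
    calc (tauRW a (rho n (t.map gen).prod r)).1.length
        ≤ (rho n (t.map gen).prod r).1.length + 1 := this _
      _ ≤ t.length + r.1.length + 1 := by omega
      _ = (a :: t).length + r.1.length := by simp; omega

lemma mem_rho_aux : ∀ (l : List (Fin n)) (r : RW n) (a : Fin n),
    a ∈ (rho n (l.map gen).prod r).1 → a ∈ l ∨ a ∈ r.1 := by
  intro l
  induction l with
  | nil => intro r a h; right; simpa using h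
  | cons b t ih =>
    intro r a h
    have h1 : rho n ((b :: t).map gen).prod = rho n (gen b) * rho n (t.map gen).prod := by
      simp [map_mul]
    rw [h1, Equiv.Perm.mul_apply, rho_gen] at h
    replace h : a ∈ (tauRW b (rho n (t.map gen).prod r)).1 := h
    have htau : ∀ (r' : RW n), a ∈ (tauRW b r').1 → a = b ∨ a ∈ r'.1 := by
      rintro ⟨l', hl'⟩ hm
      cases l' with
      | nil => left; simpa [tauRW, tauList] using hm
      | cons c u =>
        by_cases hc : c = b
        · right; simp [tauRW, tauList, hc] at hm; simp [hm]
        · simp [tauRW, tauList, hc] at hm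
          rcases hm with h | h | h
          · left; exact h
          · right; simp [h]
          · right; simp [h]
    rcases htau _ h with rfl | h
    · left; simp
    · rcases ih r a h with h | h
      · left; simp [h]
      · right; exact h

lemma glen_eq_length_wd (g : Gam n) : glen n g = (wd g).length := by
  apply le_antisymm
  · exact Nat.sInf_le ⟨wd g, rfl, (prod_wd g).symm⟩
  · apply le_csInf
    · exact ⟨(wd g).length, wd g, rfl, (prod_wd g).symm⟩
    · rintro m ⟨l, rfl, rfl⟩
      have := length_rho_le (n := n) l (nilRW n)
      simpa [wd, nilRW] using this

lemma glen_one : glen n (1 : Gam n) = 0 := by simp [glen_eq_length_wd, wd_one]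

end Words
section Tree

variable {n : ℕ} [NeZero n]

/-- The last letter ("descent") of the reduced word of `g`. -/
def desc (g : Gam n) : Fin n := (wd g).getLastD ⟨0, Nat.pos_of_ne_zero (NeZero.ne n)⟩

/-- The parent of a nonidentity vertex. -/
def par (g : Gam n) : Gam n := (((wd g).dropLast).map gen).prod

lemma wd_par (g : Gam n) : wd (par g) = (wd g).dropLast :=
  wd_prod_reduced ((wd_chain' g).prefix (wd g).dropLast_prefix)

lemma par_mul_desc {g : Gam n} (hg : g ≠ 1) : par g * gen (desc g) = g := by
  have hne : wd g ≠ [] := fun h => hg (wd_eq_nil_iff.1 h)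
  conv_rhs => rw [← prod_wd g]
  rw [← List.dropLast_concat_getLast hne]
  have : desc g = (wd g).getLast hne := by
    unfold desc; rw [List.getLastD_eq_getLast?, List.getLast?_eq_getLast hne]; rfl
  rw [this, List.map_append, List.prod_append]
  simp [par]

lemma mul_desc_eq_par {g : Gam n} (hg : g ≠ 1) : g * gen (desc g) = par g := by
  have h := par_mul_desc hg
  calc g * gen (desc g) = (par g * gen (desc g)) * gen (desc g) := by rw [h]
    _ = par g := by rw [mul_assoc, gen_mul_self, mul_one]

lemma glen_par {g : Gam n} (hg : g ≠ 1) : glen n (par g) = glen n g - 1 := by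
  rw [glen_eq_length_wd, glen_eq_length_wd, wd_par, List.length_dropLast]

lemma glen_par_lt {g : Gam n} (hg : g ≠ 1) : glen n (par g) < glen n g := by
  have hne : wd g ≠ [] := fun h => hg (wd_eq_nil_iff.1 h)
  have : 0 < (wd g).length := List.length_pos_iff.2 hne
  rw [glen_par hg, glen_eq_length_wd]
  omega

lemma prod_gen_reverse (l : List (Fin n)) :
    ((l.reverse.map gen).prod : Gam n) = ((l.map gen).prod)⁻¹ := by
  induction l with
  | nil => simp
  | cons a t ih =>
    simp only [List.reverse_cons, List.map_append, List.prod_append, List.map_cons,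
      List.prod_cons, List.map_nil, List.prod_nil, mul_one, mul_inv_rev, gen_inv, ih]

/-- Members of `pairSub s(i,j)` are products of letters `i`, `j`. -/
lemma pairSub_mem_word {i j : Fin n} {w : Gam n} (hw : w ∈ pairSub s(i, j)) :
    ∃ l : List (Fin n), (∀ a ∈ l, a = i ∨ a = j) ∧ (l.map gen).prod = w := by
  rw [pairSub_mk] at hw
  induction hw using Subgroup.closure_induction with
  | mem x hx =>
    rcases hx with rfl | rfl
    · exact ⟨[i], by simp, by simp⟩
    · exact ⟨[j], by simp, by simp⟩
  | one => exact ⟨[], by simp, by simp⟩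
  | mul x y _ _ ihx ihy =>
    obtain ⟨lx, hlx, rfl⟩ := ihx
    obtain ⟨ly, hly, rfl⟩ := ihy
    refine ⟨lx ++ ly, ?_, by rw [List.map_append, List.prod_append]⟩
    intro a ha; rcases List.mem_append.1 ha with h | h
    · exact hlx a h
    · exact hly a h
  | inv x _ ih =>
    obtain ⟨l, hl, rfl⟩ := ih
    exact ⟨l.reverse, fun a ha => hl a (List.mem_reverse.1 ha), prod_gen_reverse l⟩

lemma wd_mem_pair {i j : Fin n} {w : Gam n} (hw : w ∈ pairSub s(i, j)) :
    ∀ a ∈ wd w, a = i ∨ a = j := by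
  obtain ⟨l, hl, rfl⟩ := pairSub_mem_word hw
  intro a ha
  have := mem_rho_aux (n := n) l (nilRW n) a ha
  simp [nilRW] at this
  exact hl a this

/-- if the reduced word of `p` does not end with a letter in `{i,j}`, then `p` is
minimal in its coset `p⟨bᵢ,b_j⟩`. -/
lemma min_in_coset {i j : Fin n} {p w : Gam n} (hw : w ∈ pairSub s(i, j))
    (hi : ∀ hne : wd p ≠ [], (wd p).getLast hne ≠ i ∧ (wd p).getLast hne ≠ j) :
    glen n (p * w) = glen n p + glen n w := by
  have hcat : (wd p ++ wd w).IsChain (· ≠ ·) := by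
    rw [List.isChain_append]
    refine ⟨wd_chain' p, wd_chain' w, ?_⟩
    intro x hx y hy
    have hne : wd p ≠ [] := by
      intro h; rw [h] at hx; simp at hx
    rw [List.getLast?_eq_getLast hne] at hx
    obtain rfl : (wd p).getLast hne = x := by simpa using hx
    have hy' : y ∈ wd w := List.mem_of_mem_head? hy
    rcases wd_mem_pair hw y hy' with rfl | rfl
    · exact (hi hne).1
    · exact (hi hne).2
  have hpw : p * w = ((wd p ++ wd w).map gen).prod := by
    rw [List.map_append, List.prod_append, prod_wd, prod_wd]
  rw [glen_eq_length_wd, glen_eq_length_wd, glen_eq_length_wd, hpw,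
    wd_prod_reduced hcat, List.length_append]

lemma min_rep_of_desc_notin {i j : Fin n} {p : Gam n}
    (hi : ∀ hne : wd p ≠ [], (wd p).getLast hne ≠ i ∧ (wd p).getLast hne ≠ j) :
    ∀ h : Gam n, (QuotientGroup.mk h : Gam n ⧸ pairSub s(i, j)) = QuotientGroup.mk p →
      glen n p ≤ glen n h := by
  intro h hh
  have hmem : p⁻¹ * h ∈ pairSub s(i, j) := QuotientGroup.eq.1 hh.symm
  have : h = p * (p⁻¹ * h) := by group
  rw [this, min_in_coset hmem hi]
  omega

end Tree
section Fvec

variable {n : ℕ} [NeZero n]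

lemma ne_one_iff_wd {g : Gam n} : g ≠ 1 ↔ wd g ≠ [] :=
  (not_congr wd_eq_nil_iff).symm

lemma desc_eq_getLast {g : Gam n} (hne : wd g ≠ []) : desc g = (wd g).getLast hne := by
  unfold desc
  rw [List.getLastD_eq_getLast?, List.getLast?_eq_getLast hne]
  rfl

lemma desc_par_ne {v : Gam n} (hv : v ≠ 1) (hp : par v ≠ 1) : desc (par v) ≠ desc v := by
  have hne : wd v ≠ [] := ne_one_iff_wd.1 hv
  have hne' : wd (par v) ≠ [] := ne_one_iff_wd.1 hp
  have hsplit : (wd v).dropLast ++ [(wd v).getLast hne] = wd v :=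
    List.dropLast_concat_getLast hne
  have hch := wd_chain' v
  rw [← hsplit, List.isChain_append] at hch
  have hne'' : (wd v).dropLast ≠ [] := by rwa [wd_par] at hne'
  have key := hch.2.2 ((wd v).dropLast.getLast hne'')
    (by rw [List.getLast?_eq_getLast hne'']; exact Option.mem_def.2 rfl)
    ((wd v).getLast hne) (by simp)
  rw [desc_eq_getLast hne, desc_eq_getLast hne']
  have : (wd (par v)).getLast hne' = (wd v).dropLast.getLast hne'' := by
    congr 1 <;> rw [wd_par]
  rw [this]
  exact key

/-- The fibonacci data at a vertex: `fvec F v i = F [v;{i, desc v}]`. -/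
def fvec (F : AltGeo n → ℕ) (v : Gam n) (i : Fin n) : ℕ :=
  if h : i = desc v then 0 else F (mkGeo i (desc v) h v)

lemma fvec_of_ne (F : AltGeo n → ℕ) {v : Gam n} {i : Fin n} (h : i ≠ desc v) :
    fvec F v i = F (mkGeo i (desc v) h v) := dif_neg h

lemma fvec_of_eq (F : AltGeo n → ℕ) {v : Gam n} {i : Fin n} (h : i = desc v) :
    fvec F v i = 0 := dif_pos h

lemma altgeo_mk_eq : ∀ {pr pr' : Sym2 (Fin n)} (_ : pr = pr') {nd : ¬ pr.IsDiag}
    {nd' : ¬ pr'.IsDiag} {c : Gam n ⧸ pairSub pr} {c' : Gam n ⧸ pairSub pr'},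
    HEq c c' → (⟨pr, nd, c⟩ : AltGeo n) = ⟨pr', nd', c'⟩ := by
  rintro pr _ rfl nd nd' c c' h
  rw [heq_iff_eq] at h
  subst h
  rfl

lemma coset_heq : ∀ {pr pr' : Sym2 (Fin n)} (_ : pr = pr') {g g' : Gam n},
    g⁻¹ * g' ∈ pairSub pr →
    HEq (QuotientGroup.mk g : Gam n ⧸ pairSub pr) (QuotientGroup.mk g' : Gam n ⧸ pairSub pr') := by
  rintro pr _ rfl g g' hcos
  exact heq_of_eq (QuotientGroup.eq.2 hcos)

lemma mkGeo_eq {i k i' k' : Fin n} (hik : i ≠ k) (hik' : i' ≠ k') {g g' : Gam n}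
    (hpair : s(i, k) = s(i', k')) (hcos : g⁻¹ * g' ∈ pairSub s(i, k)) :
    mkGeo i k hik g = mkGeo i' k' hik' g' := by
  unfold mkGeo
  exact altgeo_mk_eq hpair (coset_heq hpair hcos)

lemma gen_mem_pairSub_left (i k : Fin n) : gen i ∈ pairSub s(i, k) := by
  rw [pairSub_mk]; exact Subgroup.subset_closure (by simp)

lemma gen_mem_pairSub_right (i k : Fin n) : gen k ∈ pairSub s(i, k) := by
  rw [pairSub_mk]; exact Subgroup.subset_closure (by simp)

lemma inv_mul_par {v : Gam n} (hv : v ≠ 1) : v⁻¹ * par v = gen (desc v) := by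
  have h := mul_desc_eq_par hv
  rw [← h, ← mul_assoc, inv_mul_cancel, one_mul]

/-- Base case of the recurrence: children of the root. -/
lemma fvec_base (F : AltGeo n → ℕ) (hF : IsFib n F) {v : Gam n} (hv : v ≠ 1)
    (hp : par v = 1) {i : Fin n} (hik : i ≠ desc v) : fvec F v i = 1 := by
  have hvk : v = gen (desc v) := by
    have := par_mul_desc hv
    rw [hp, one_mul] at this
    exact this.symm
  rw [fvec_of_ne F hik]
  apply hF.1
  show QuotientGroup.mk v = QuotientGroup.mk 1
  rw [QuotientGroup.eq]
  have hv1 : v⁻¹ * 1 = gen (desc v) := by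
    rw [mul_one]
    conv_lhs => rw [hvk]
    rw [gen_inv]
  rw [hv1]
  exact gen_mem_pairSub_right i (desc v)

lemma min_par {v : Gam n} (hp : par v ≠ 1) {i k : Fin n}
    (hi : desc (par v) ≠ i) (hk : desc (par v) ≠ k) :
    ∀ h : Gam n, (QuotientGroup.mk h : Gam n ⧸ pairSub s(i, k)) = QuotientGroup.mk (par v) →
      glen n (par v) ≤ glen n h := by
  apply min_rep_of_desc_notin
  intro hne
  rw [← desc_eq_getLast hne]
  exact ⟨hi, hk⟩

lemma coset_ne_one {v : Gam n} (hp : par v ≠ 1) {i k : Fin n}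
    (hi : desc (par v) ≠ i) (hk : desc (par v) ≠ k) :
    (QuotientGroup.mk (par v) : Gam n ⧸ pairSub s(i, k)) ≠ QuotientGroup.mk 1 := by
  intro h
  have h1 := min_par hp hi hk 1 h.symm
  rw [glen_one] at h1
  have : glen n (par v) = 0 := Nat.le_zero.1 h1
  rw [glen_eq_length_wd] at this
  exact hp (wd_eq_nil_iff.1 (List.length_eq_zero_iff.1 this))

/-- The recurrence for `fvec` at a vertex whose parent is not the root. -/
lemma fvec_rec (F : AltGeo n → ℕ) (hF : IsFib n F) {v : Gam n} (hv : v ≠ 1)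
    (hp : par v ≠ 1) {i : Fin n} (hik : i ≠ desc v) :
    fvec F v i = if i = desc (par v) then fvec F (par v) (desc v)
      else fvec F (par v) i + fvec F (par v) (desc v) := by
  have hmk : desc (par v) ≠ desc v := desc_par_ne hv hp
  have hcosmem : ∀ j : Fin n, v⁻¹ * par v ∈ pairSub s(j, desc v) := fun j => by
    rw [inv_mul_par hv]; exact gen_mem_pairSub_right j (desc v)
  by_cases him : i = desc (par v)
  · rw [if_pos him, fvec_of_ne F hik, fvec_of_ne F hmk.symm]
    congr 1
    exact mkGeo_eq hik hmk.symm (by rw [← him]; exact Sym2.eq_swap) (hcosmem i)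
  · rw [if_neg him, fvec_of_ne F hik, fvec_of_ne F him, fvec_of_ne F hmk.symm]
    have hmain : mkGeo i (desc v) hik v = mkGeo i (desc v) hik (par v) :=
      mkGeo_eq hik hik rfl (hcosmem i)
    rw [hmain]
    exact hF.2 (mkGeo i (desc v) hik (par v)) (coset_ne_one hp (Ne.symm him) hmk) (par v) rfl
      (min_par hp (Ne.symm him) hmk) i (desc v) (desc (par v)) rfl (Ne.symm him) hmk
      (by rw [mul_desc_eq_par hp]; exact glen_par_lt hp)

lemma fvec_pos (F : AltGeo n → ℕ) (hF : IsFib n F) :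
    ∀ N v, glen n v ≤ N → v ≠ (1 : Gam n) → ∀ i, i ≠ desc v → 1 ≤ fvec F v i := by
  intro N
  induction N with
  | zero =>
    intro v hlen hv i hi
    exact absurd (wd_eq_nil_iff.1 (List.length_eq_zero_iff.1
      (Nat.le_zero.1 (glen_eq_length_wd v ▸ hlen)))) hv
  | succ N ih =>
    intro v hlen hv i hi
    by_cases hp : par v = 1
    · rw [fvec_base F hF hv hp hi]
    · have hplen : glen n (par v) ≤ N := by
        have := glen_par_lt hv
        omega
      have hmk : desc (par v) ≠ desc v := desc_par_ne hv hp
      rw [fvec_rec F hF hv hp hi]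
      by_cases him : i = desc (par v)
      · rw [if_pos him]
        exact ih (par v) hplen hp (desc v) hmk.symm
      · rw [if_neg him]
        have h1 := ih (par v) hplen hp i him
        omega

lemma fvec_tri (F : AltGeo n → ℕ) (hF : IsFib n F) :
    ∀ N v, glen n v ≤ N → v ≠ (1 : Gam n) → ∀ l i j, l ≠ desc v → i ≠ desc v → j ≠ desc v →
      l ≠ i → l ≠ j → i ≠ j → fvec F v l ≤ fvec F v i + fvec F v j := by
  intro N
  induction N with
  | zero =>
    intro v hlen hv
    exact absurd (wd_eq_nil_iff.1 (List.length_eq_zero_iff.1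
      (Nat.le_zero.1 (glen_eq_length_wd v ▸ hlen)))) hv
  | succ N ih =>
    intro v hlen hv l i j hl hi hj hli hlj hij
    by_cases hp : par v = 1
    · rw [fvec_base F hF hv hp hl, fvec_base F hF hv hp hi, fvec_base F hF hv hp hj]
      omega
    · have hplen : glen n (par v) ≤ N := by
        have := glen_par_lt hv
        omega
      have hmk : desc (par v) ≠ desc v := desc_par_ne hv hp
      have hpk : 1 ≤ fvec F (par v) (desc v) :=
        fvec_pos F hF N (par v) hplen hp (desc v) hmk.symm
      rw [fvec_rec F hF hv hp hl, fvec_rec F hF hv hp hi, fvec_rec F hF hv hp hj]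
      by_cases hlm : l = desc (par v)
      · rw [if_pos hlm, if_neg (fun h => hli (hlm.trans h.symm)),
          if_neg (fun h => hlj (hlm.trans h.symm))]
        omega
      · rw [if_neg hlm]
        by_cases him : i = desc (par v)
        · rw [if_pos him, if_neg (fun h => hij (him.trans h.symm))]
          have := ih (par v) hplen hp l j (desc v) hlm
            (fun h => hij (him.trans h.symm)) hmk.symm hlj hl hj
          omega
        · rw [if_neg him]
          by_cases hjm : j = desc (par v)
          · rw [if_pos hjm]
            have := ih (par v) hplen hp l i (desc v) hlm him hmk.symm hli hl hi
            omega
          · rw [if_neg hjm]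
            have := ih (par v) hplen hp l i j hlm him hjm hli hlj hij
            omega

end Fvec
section Reconstruction

variable {n : ℕ} [NeZero n]

lemma exists_third (hn : 3 ≤ n) (a b : Fin n) : ∃ i : Fin n, i ≠ a ∧ i ≠ b := by
  by_contra h
  push_neg at h
  have hsub : (Finset.univ : Finset (Fin n)) ⊆ {a, b} := by
    intro i _
    rcases eq_or_ne i a with rfl | hia
    · simp
    · simp [h i hia]
  have := Finset.card_le_card hsub
  have hcard : ({a, b} : Finset (Fin n)).card ≤ 2 := Finset.card_insert_le a {b} |>.trans (by simp)
  simp [Finset.card_univ] at this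
  omega

/-- A nonidentity vertex is determined by its descent and its fibonacci data. -/
lemma fvec_inj (hn : 3 ≤ n) (F : AltGeo n → ℕ) (hF : IsFib n F) :
    ∀ N (v v' : Gam n), glen n v ≤ N → v ≠ 1 → v' ≠ 1 → desc v = desc v' →
      (∀ i, fvec F v i = fvec F v' i) → v = v' := by
  intro N
  induction N with
  | zero =>
    intro v v' hlen hv hv' _ _
    exact absurd (wd_eq_nil_iff.1 (List.length_eq_zero_iff.1
      (Nat.le_zero.1 (glen_eq_length_wd v ▸ hlen)))) hv
  | succ N ih =>
    intro v v' hlen hv hv' hdesc hfv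
    have hbig : ∀ (w w' : Gam n), w ≠ 1 → w' ≠ 1 → desc w = desc w' →
        (∀ i, fvec F w i = fvec F w' i) → par w = 1 → par w' ≠ 1 → False := by
      intro w w' hw hw' hd hf hpw hpw'
      have hmk' : desc (par w') ≠ desc w' := desc_par_ne hw' hpw'
      obtain ⟨i, hi1, hi2⟩ := exists_third hn (desc w') (desc (par w'))
      have h1 : fvec F w i = 1 := fvec_base F hF hw hpw (hd ▸ hi1)
      have h2 : fvec F w' i = fvec F (par w') i + fvec F (par w') (desc w') := by
        rw [fvec_rec F hF hw' hpw' hi1, if_neg hi2]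
      have h3 := fvec_pos F hF (glen n (par w')) (par w') le_rfl hpw' i hi2
      have h4 := fvec_pos F hF (glen n (par w')) (par w') le_rfl hpw' (desc w') hmk'.symm
      have := hf i
      omega
    by_cases hp : par v = 1
    · by_cases hp' : par v' = 1
      · have h1 : v = gen (desc v) := by
          have := par_mul_desc hv; rw [hp, one_mul] at this; exact this.symm
        have h2 : v' = gen (desc v') := by
          have := par_mul_desc hv'; rw [hp', one_mul] at this; exact this.symm
        rw [h1, h2, hdesc]
      · exact absurd (hbig v v' hv hv' hdesc hfv hp hp') (fun h => h)
    · by_cases hp' : par v' = 1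
      · exact absurd (hbig v' v hv' hv hdesc.symm (fun i => (hfv i).symm) hp' hp)
          (fun h => h)
      · -- both parents nontrivial
        have hmkv : desc (par v) ≠ desc v := desc_par_ne hv hp
        have hmkv' : desc (par v') ≠ desc v' := desc_par_ne hv' hp'
        have hposp : ∀ i, i ≠ desc (par v) → 1 ≤ fvec F (par v) i :=
          fun i hi => fvec_pos F hF (glen n (par v)) (par v) le_rfl hp i hi
        have hposp' : ∀ i, i ≠ desc (par v') → 1 ≤ fvec F (par v') i :=
          fun i hi => fvec_pos F hF (glen n (par v')) (par v') le_rfl hp' i hi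
        -- descents of parents agree
        have hmm : desc (par v) = desc (par v') := by
          by_contra hne
          have e1 : fvec F v (desc (par v')) =
              fvec F (par v) (desc (par v')) + fvec F (par v) (desc v) := by
            rw [fvec_rec F hF hv hp (hdesc ▸ hmkv'), if_neg (fun h => hne h.symm)]
          have e2 : fvec F v' (desc (par v')) = fvec F (par v') (desc v') := by
            rw [fvec_rec F hF hv' hp' hmkv', if_pos rfl]
          have e3 : fvec F v (desc (par v)) = fvec F (par v) (desc v) := by
            rw [fvec_rec F hF hv hp hmkv, if_pos rfl]
          have e4 : fvec F v' (desc (par v)) =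
              fvec F (par v') (desc (par v)) + fvec F (par v') (desc v') := by
            rw [fvec_rec F hF hv' hp' (hdesc.symm ▸ hmkv), if_neg hne]
          have p1 := hposp (desc (par v')) (fun h => hne h.symm)
          have p2 := hposp' (desc (par v)) hne
          have q1 := hfv (desc (par v'))
          have q2 := hfv (desc (par v))
          omega
        -- the fibonacci data of the parents agree
        have hfp : ∀ i, fvec F (par v) i = fvec F (par v') i := by
          intro i
          by_cases him : i = desc (par v)
          · rw [fvec_of_eq F him, fvec_of_eq F (him.trans hmm)]
          · have him' : i ≠ desc (par v') := fun h => him (h.trans hmm.symm)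
            by_cases hik : i = desc v
            · -- use the value of `fvec v` at the parents' descent
              have e3 : fvec F v (desc (par v)) = fvec F (par v) (desc v) := by
                rw [fvec_rec F hF hv hp hmkv, if_pos rfl]
              have e4 : fvec F v' (desc (par v)) = fvec F (par v') (desc v') := by
                rw [fvec_rec F hF hv' hp' (fun h => hmkv' (hmm.symm.trans h)), if_pos hmm]
              have := hfv (desc (par v))
              rw [hik, hdesc] at *
              omega
            · have hik' : i ≠ desc v' := hdesc ▸ hik
              have e1 : fvec F v i = fvec F (par v) i + fvec F (par v) (desc v) := by
                rw [fvec_rec F hF hv hp hik, if_neg him]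
              have e2 : fvec F v' i = fvec F (par v') i + fvec F (par v') (desc v') := by
                rw [fvec_rec F hF hv' hp' hik', if_neg him']
              have e3 : fvec F v (desc (par v)) = fvec F (par v) (desc v) := by
                rw [fvec_rec F hF hv hp hmkv, if_pos rfl]
              have e4 : fvec F v' (desc (par v)) = fvec F (par v') (desc v') := by
                rw [fvec_rec F hF hv' hp' (fun h => hmkv' (hmm.symm.trans h)), if_pos hmm]
              have q1 := hfv i
              have q2 := hfv (desc (par v))
              omega
        have hplen : glen n (par v) ≤ N := by
          have := glen_par_lt hv; omega
        have hpp : par v = par v' := ih (par v) (par v') hplen hp hp' hmm hfp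
        calc v = par v * gen (desc v) := (par_mul_desc hv).symm
          _ = par v' * gen (desc v') := by rw [hpp, hdesc]
          _ = v' := par_mul_desc hv'

end Reconstruction
section Pack

variable {n : ℕ} [NeZero n]

lemma sym2_exists {α : Type*} (p : Sym2 α) : ∃ x y, p = s(x, y) := by
  induction p using Sym2.ind with
  | _ x y => exact ⟨x, y, rfl⟩

/-- A choice of the first color of the pair of `γ`. -/
noncomputable def gi (γ : AltGeo n) : Fin n := (sym2_exists γ.pair).choose

/-- A choice of the second color of the pair of `γ`. -/
noncomputable def gj (γ : AltGeo n) : Fin n :=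
  (sym2_exists γ.pair).choose_spec.choose

lemma pair_eq_gij (γ : AltGeo n) : γ.pair = s(gi γ, gj γ) :=
  (sym2_exists γ.pair).choose_spec.choose_spec

lemma gi_ne_gj (γ : AltGeo n) : gi γ ≠ gj γ := by
  have h := γ.nd
  rw [pair_eq_gij γ, Sym2.mk_isDiag_iff] at h
  exact h

lemma exists_minrep (γ : AltGeo n) : ∃ g : Gam n, QuotientGroup.mk g = γ.coset ∧
    ∀ h : Gam n, QuotientGroup.mk h = γ.coset → glen n g ≤ glen n h := by
  obtain ⟨g0, hg0⟩ := QuotientGroup.mk_surjective γ.coset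
  have hS : (glen n g0) ∈ {m | ∃ g : Gam n, QuotientGroup.mk g = γ.coset ∧ glen n g = m} :=
    ⟨g0, hg0, rfl⟩
  obtain ⟨g, hg, hlen⟩ := Nat.sInf_mem (Set.nonempty_of_mem hS)
  refine ⟨g, hg, fun h hh => ?_⟩
  rw [hlen]
  exact Nat.sInf_le ⟨h, hh, rfl⟩

/-- A choice of a minimal length coset representative. -/
noncomputable def minrep (γ : AltGeo n) : Gam n := (exists_minrep γ).choose

lemma minrep_mk (γ : AltGeo n) : QuotientGroup.mk (minrep γ) = γ.coset :=
  (exists_minrep γ).choose_spec.1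

lemma minrep_min (γ : AltGeo n) : ∀ h : Gam n, QuotientGroup.mk h = γ.coset →
    glen n (minrep γ) ≤ glen n h := (exists_minrep γ).choose_spec.2

lemma minrep_ne_one {γ : AltGeo n} (hroot : γ.coset ≠ QuotientGroup.mk 1) :
    minrep γ ≠ 1 := by
  intro h
  exact hroot (by rw [← h]; exact (minrep_mk γ).symm)

lemma desc_minrep_ne {γ : AltGeo n} (hroot : γ.coset ≠ QuotientGroup.mk 1) :
    desc (minrep γ) ≠ gi γ ∧ desc (minrep γ) ≠ gj γ := by
  have hv := minrep_ne_one hroot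
  have key : ∀ k : Fin n, gen k ∈ pairSub γ.pair → desc (minrep γ) ≠ k := by
    intro k hk hdk
    have hcos : QuotientGroup.mk (minrep γ * gen k) = γ.coset := by
      rw [← minrep_mk γ]
      refine (QuotientGroup.eq.2 ?_).symm
      have : (minrep γ)⁻¹ * (minrep γ * gen k) = gen k := by group
      rw [this]
      exact hk
    have := minrep_min γ _ hcos
    rw [← hdk, mul_desc_eq_par hv] at this
    exact absurd this (not_le.2 (glen_par_lt hv))
  constructor
  · exact key _ (by rw [pair_eq_gij γ]; exact gen_mem_pairSub_left _ _)
  · exact key _ (by rw [pair_eq_gij γ]; exact gen_mem_pairSub_right _ _)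

lemma F_eq_fvec (F : AltGeo n → ℕ) (hF : IsFib n F) {γ : AltGeo n}
    (hroot : γ.coset ≠ QuotientGroup.mk 1) :
    F γ = fvec F (minrep γ) (gi γ) + fvec F (minrep γ) (gj γ) := by
  have hv := minrep_ne_one hroot
  obtain ⟨hki, hkj⟩ := desc_minrep_ne hroot
  have hglen : glen n (minrep γ * gen (desc (minrep γ))) < glen n (minrep γ) := by
    rw [mul_desc_eq_par hv]; exact glen_par_lt hv
  have := hF.2 γ hroot (minrep γ) (minrep_mk γ) (minrep_min γ) (gi γ) (gj γ)
    (desc (minrep γ)) (pair_eq_gij γ) hki hkj hglen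
  rw [this, fvec_of_ne F hki.symm, fvec_of_ne F hkj.symm]

lemma F_ge_two (F : AltGeo n → ℕ) (hF : IsFib n F) {γ : AltGeo n}
    (hroot : γ.coset ≠ QuotientGroup.mk 1) : 2 ≤ F γ := by
  have hv := minrep_ne_one hroot
  obtain ⟨hki, hkj⟩ := desc_minrep_ne hroot
  have h1 := fvec_pos F hF (glen n (minrep γ)) (minrep γ) le_rfl hv (gi γ) hki.symm
  have h2 := fvec_pos F hF (glen n (minrep γ)) (minrep γ) le_rfl hv (gj γ) hkj.symm
  rw [F_eq_fvec F hF hroot]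
  omega

lemma fvec_le_F (F : AltGeo n → ℕ) (hF : IsFib n F) {γ : AltGeo n}
    (hroot : γ.coset ≠ QuotientGroup.mk 1) (l : Fin n) :
    fvec F (minrep γ) l ≤ F γ := by
  have hv := minrep_ne_one hroot
  obtain ⟨hki, hkj⟩ := desc_minrep_ne hroot
  have hFe := F_eq_fvec F hF hroot
  by_cases hl : l = desc (minrep γ)
  · rw [fvec_of_eq F hl]; omega
  · by_cases hli : l = gi γ
    · rw [hli]; omega
    · by_cases hlj : l = gj γ
      · rw [hlj]; omega
      · have := fvec_tri F hF (glen n (minrep γ)) (minrep γ) le_rfl hv l (gi γ) (gj γ)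
          hl hki.symm hkj.symm hli hlj (gi_ne_gj γ)
        omega

lemma F_root (F : AltGeo n → ℕ) (hF : IsFib n F) {γ : AltGeo n}
    (hroot : γ.coset = QuotientGroup.mk 1) : F γ = 1 := hF.1 γ hroot

/-- Extensionality for alternating geodesics. -/
lemma altgeo_ext {α β : AltGeo n} (h1 : α.pair = β.pair) (h2 : HEq α.coset β.coset) :
    α = β := by
  cases α with
  | mk p nd c =>
    cases β with
    | mk p' nd' c' => exact altgeo_mk_eq h1 h2

lemma altgeo_eq_of_minrep {γ γ' : AltGeo n} (h1 : γ.pair = γ'.pair)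
    (h2 : minrep γ = minrep γ') : γ = γ' := by
  refine altgeo_ext h1 ?_
  have e1 : γ.coset = QuotientGroup.mk (minrep γ) := (minrep_mk γ).symm
  have e2 : γ'.coset = QuotientGroup.mk (minrep γ') := (minrep_mk γ').symm
  rw [e1, e2]
  exact coset_heq h1 (by rw [h2, inv_mul_cancel]; exact Subgroup.one_mem _)

end Pack
section Counting

variable {n : ℕ} [NeZero n]

/-- The target of the counting injection. -/
abbrev Tgt (n m : ℕ) : Type :=
  Σ _t : {p : Fin n × Fin n // p.1 ≠ p.2},
    Fin n × ({l : Fin n // l ≠ _t.val.1 ∧ l ≠ _t.val.2} → Fin (m + 1))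

lemma card_subpair {a b : Fin n} (hab : a ≠ b) :
    Fintype.card {l : Fin n // l ≠ a ∧ l ≠ b} = n - 2 := by
  rw [Fintype.card_subtype]
  have h : (Finset.univ.filter fun l : Fin n => l ≠ a ∧ l ≠ b) = Finset.univ \ {a, b} := by
    ext l; simp [not_or]
  rw [h, Finset.card_sdiff_of_subset (Finset.subset_univ _), Finset.card_pair hab, Finset.card_univ,
    Fintype.card_fin]

lemma card_Tgt (m : ℕ) : Fintype.card (Tgt n m) ≤ n ^ 3 * (m + 1) ^ (n - 2) := by
  classical
  rw [Fintype.card_sigma]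
  have h : ∀ t : {p : Fin n × Fin n // p.1 ≠ p.2},
      Fintype.card (Fin n × ({l : Fin n // l ≠ t.val.1 ∧ l ≠ t.val.2} → Fin (m + 1)))
        = n * (m + 1) ^ (n - 2) := by
    intro t
    rw [Fintype.card_prod, Fintype.card_fun, card_subpair t.2, Fintype.card_fin,
      Fintype.card_fin]
  rw [Finset.sum_congr rfl (fun t _ => h t), Finset.sum_const, Finset.card_univ, smul_eq_mul]
  have h2 : Fintype.card {p : Fin n × Fin n // p.1 ≠ p.2} ≤ n * n := by
    have := Fintype.card_subtype_le (p := fun p : Fin n × Fin n => p.1 ≠ p.2)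
    simpa using this
  calc Fintype.card {p : Fin n × Fin n // p.1 ≠ p.2} * (n * (m + 1) ^ (n - 2))
      ≤ (n * n) * (n * (m + 1) ^ (n - 2)) := Nat.mul_le_mul_right _ h2
    _ = n ^ 3 * (m + 1) ^ (n - 2) := by ring

lemma heq_prod_ext {m : ℕ} {a b a' b' : Fin n} (ha : a = a') (hb : b = b')
    {x x' : Fin n} {f : {l : Fin n // l ≠ a ∧ l ≠ b} → Fin (m + 1)}
    {f' : {l : Fin n // l ≠ a' ∧ l ≠ b'} → Fin (m + 1)}
    (h : HEq (x, f) (x', f')) :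
    x = x' ∧ ∀ (l : Fin n) (h1 : l ≠ a') (h2 : l ≠ b'),
      f ⟨l, fun hc => h1 (hc.trans ha), fun hc => h2 (hc.trans hb)⟩ = f' ⟨l, h1, h2⟩ := by
  subst ha
  subst hb
  rw [heq_iff_eq, Prod.mk.injEq] at h
  exact ⟨h.1, fun l h1 h2 => by rw [h.2]⟩

lemma fiber_card (hn : 3 ≤ n) (F : AltGeo n → ℕ) (hF : IsFib n F) (m : ℕ)
    (w : Finset (AltGeo n)) (hw1 : ∀ γ ∈ w, γ.coset ≠ QuotientGroup.mk 1)
    (hw2 : ∀ γ ∈ w, F γ = m) : w.card ≤ n ^ 3 * (m + 1) ^ (n - 2) := by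
  classical
  have h01 : (⟨0, by omega⟩ : Fin n) ≠ ⟨1, by omega⟩ := by
    simp [Fin.ext_iff]
  refine le_trans (Finset.card_le_card_of_injOn (fun γ =>
      (if h : gj γ ≠ desc (minrep γ) then
        (⟨⟨(gj γ, desc (minrep γ)), h⟩,
          (gi γ, fun l => ⟨min (fvec F (minrep γ) l.1) m,
            Nat.lt_succ_of_le (min_le_right _ _)⟩)⟩ : Tgt n m)
      else ⟨⟨(⟨0, by omega⟩, ⟨1, by omega⟩), h01⟩,
        (⟨0, by omega⟩, fun _ => ⟨0, Nat.succ_pos m⟩)⟩))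
      (fun γ _ => Finset.mem_univ _) ?_)
    (by rw [Finset.card_univ]; exact card_Tgt m)
  intro γ hγ γ' hγ' heq
  have hroot := hw1 γ hγ
  have hroot' := hw1 γ' hγ'
  have hv : minrep γ ≠ 1 := minrep_ne_one hroot
  have hv' : minrep γ' ≠ 1 := minrep_ne_one hroot'
  have hki : desc (minrep γ) ≠ gi γ := (desc_minrep_ne hroot).1
  have hkj : desc (minrep γ) ≠ gj γ := (desc_minrep_ne hroot).2
  have hki' : desc (minrep γ') ≠ gi γ' := (desc_minrep_ne hroot').1
  have hkj' : desc (minrep γ') ≠ gj γ' := (desc_minrep_ne hroot').2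
  simp only at heq
  rw [dif_pos (Ne.symm hkj), dif_pos (Ne.symm hkj'), Sigma.mk.inj_iff] at heq
  obtain ⟨h1, h2⟩ := heq
  rw [Subtype.mk.injEq, Prod.mk.injEq] at h1
  obtain ⟨hjj, hkk⟩ := h1
  obtain ⟨hii, hvecs⟩ := heq_prod_ext hjj hkk h2
  -- the recorded fibonacci values agree off `{gj, k}`
  have hoff : ∀ l : Fin n, l ≠ gj γ' → l ≠ desc (minrep γ') →
      fvec F (minrep γ) l = fvec F (minrep γ') l := by
    intro l hl1 hl2
    have := hvecs l hl1 hl2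
    rw [Fin.mk.injEq] at this
    have b1 : fvec F (minrep γ) l ≤ m := (hw2 γ hγ) ▸ fvec_le_F F hF hroot l
    have b2 : fvec F (minrep γ') l ≤ m := (hw2 γ' hγ') ▸ fvec_le_F F hF hroot' l
    rwa [Nat.min_eq_left b1, Nat.min_eq_left b2] at this
  -- all fibonacci values agree
  have hall : ∀ l : Fin n, fvec F (minrep γ) l = fvec F (minrep γ') l := by
    intro l
    by_cases hl2 : l = desc (minrep γ')
    · rw [fvec_of_eq F (hl2.trans hkk.symm), fvec_of_eq F hl2]
    · by_cases hl1 : l = gj γ'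
      · -- value recovered from the total `F γ = m`
        have e1 := F_eq_fvec F hF hroot
        have e2 := F_eq_fvec F hF hroot'
        rw [hw2 γ hγ] at e1
        rw [hw2 γ' hγ'] at e2
        have hgi : fvec F (minrep γ) (gi γ) = fvec F (minrep γ') (gi γ') := by
          rw [← hii]
          exact hoff (gi γ) (fun h => gi_ne_gj γ (h.trans hjj.symm))
            (fun h => hki (hkk ▸ h.symm))
        rw [hl1, ← hjj] at *
        omega
      · exact hoff l hl1 hl2
  have hvv : minrep γ = minrep γ' :=
    fvec_inj hn F hF (glen n (minrep γ)) (minrep γ) (minrep γ') le_rfl hv hv' hkk hall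
  exact altgeo_eq_of_minrep (by rw [pair_eq_gij γ, pair_eq_gij γ', hii, hjj]) hvv

end Counting
/-- The sum `∑_{γ∈𝒜} F(γ)^{−s}` converges for `s > n − 1`. -/
theorem fibonacci_sum_converges (n : ℕ) (hn : 3 ≤ n) (F : AltGeo n → ℕ) (hF : IsFib n F)
    (s : ℝ) (hs : (n : ℝ) - 1 < s) :
    Summable fun γ : AltGeo n => (F γ : ℝ) ^ (-s) := by
  haveI : NeZero n := ⟨by omega⟩
  classical
  have hn3 : (3 : ℝ) ≤ (n : ℝ) := by exact_mod_cast hn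
  have hspos : 0 < s := by linarith
  set f : AltGeo n → ℝ := fun γ => (F γ : ℝ) ^ (-s) with hfdef
  have hfnonneg : ∀ γ, 0 ≤ f γ := fun γ => Real.rpow_nonneg (Nat.cast_nonneg _) _
  -- the majorant series
  set g : ℕ → ℝ := fun m => (n : ℝ) ^ 3 * ((m : ℝ) + 1) ^ (n - 2) * (m : ℝ) ^ (-s) with hgdef
  have hgnonneg : ∀ m, 0 ≤ g m := fun m => by
    apply mul_nonneg (mul_nonneg (by positivity) (by positivity))
    exact Real.rpow_nonneg (Nat.cast_nonneg _) _
  have hgsum : Summable g := by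
    have hp : ((n : ℝ) - 2) - s < -1 := by linarith
    have hmaj : ∀ m : ℕ, g m ≤ ((n : ℝ) ^ 3 * 2 ^ (n - 2)) * (m : ℝ) ^ (((n : ℝ) - 2) - s) := by
      intro m
      rcases Nat.eq_zero_or_pos m with rfl | hm
      · simp only [hgdef, Nat.cast_zero]
        rw [Real.zero_rpow (by linarith), Real.zero_rpow (by linarith)]
        simp
      · have hm1 : (1 : ℝ) ≤ (m : ℝ) := by exact_mod_cast hm
        have hmpos : (0 : ℝ) < (m : ℝ) := by linarith
        have h1 : ((m : ℝ) + 1) ^ (n - 2) ≤ 2 ^ (n - 2) * (m : ℝ) ^ (n - 2) := by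
          rw [← mul_pow]
          exact pow_le_pow_left₀ (by linarith) (by linarith) _
        have h2 : (m : ℝ) ^ (n - 2) * (m : ℝ) ^ (-s) = (m : ℝ) ^ (((n : ℝ) - 2) - s) := by
          rw [← Real.rpow_natCast (m : ℝ) (n - 2), ← Real.rpow_add hmpos]
          congr 1
          have : ((n - 2 : ℕ) : ℝ) = (n : ℝ) - 2 := by
            have : 2 ≤ n := by omega
            push_cast [Nat.cast_sub this]
            ring
          rw [this]
          ring
        calc g m = (n : ℝ) ^ 3 * ((m : ℝ) + 1) ^ (n - 2) * (m : ℝ) ^ (-s) := rfl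
          _ ≤ (n : ℝ) ^ 3 * (2 ^ (n - 2) * (m : ℝ) ^ (n - 2)) * (m : ℝ) ^ (-s) := by
              apply mul_le_mul_of_nonneg_right _ (Real.rpow_nonneg (Nat.cast_nonneg _) _)
              exact mul_le_mul_of_nonneg_left h1 (by positivity)
          _ = ((n : ℝ) ^ 3 * 2 ^ (n - 2)) * ((m : ℝ) ^ (n - 2) * (m : ℝ) ^ (-s)) := by ring
          _ = ((n : ℝ) ^ 3 * 2 ^ (n - 2)) * (m : ℝ) ^ (((n : ℝ) - 2) - s) := by rw [h2]
    exact Summable.of_nonneg_of_le hgnonneg hmaj ((Real.summable_nat_rpow.2 hp).mul_left _)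
  -- bound on partial sums
  apply summable_of_sum_le (c := (Fintype.card (Sym2 (Fin n)) : ℝ) + tsum g) hfnonneg
  intro u
  rw [← Finset.sum_filter_add_sum_filter_not u (fun γ => γ.coset = QuotientGroup.mk 1) f]
  have hroot_bound : ∑ γ ∈ u.filter (fun γ => γ.coset = QuotientGroup.mk 1), f γ
      ≤ (Fintype.card (Sym2 (Fin n)) : ℝ) := by
    have hone : ∀ γ ∈ u.filter (fun γ => γ.coset = QuotientGroup.mk 1), f γ ≤ 1 := by
      intro γ hγ
      have hroot := (Finset.mem_filter.1 hγ).2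
      simp only [hfdef]
      rw [F_root F hF hroot]
      simp
    calc ∑ γ ∈ u.filter (fun γ => γ.coset = QuotientGroup.mk 1), f γ
        ≤ (u.filter (fun γ => γ.coset = QuotientGroup.mk 1)).card • (1 : ℝ) :=
          Finset.sum_le_card_nsmul _ _ _ hone
      _ = ((u.filter (fun γ => γ.coset = QuotientGroup.mk 1)).card : ℝ) := by simp
      _ ≤ (Fintype.card (Sym2 (Fin n)) : ℝ) := by
          have : (u.filter (fun γ => γ.coset = QuotientGroup.mk 1)).card
              ≤ Fintype.card (Sym2 (Fin n)) := by
            rw [← Finset.card_univ]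
            apply Finset.card_le_card_of_injOn (fun γ => γ.pair)
              (fun γ _ => Finset.mem_univ _)
            intro γ hγ γ' hγ' hpair
            have h1 := (Finset.mem_filter.1 hγ).2
            have h2 := (Finset.mem_filter.1 hγ').2
            refine altgeo_ext hpair ?_
            rw [h1, h2]
            exact coset_heq hpair (by simpa using Subgroup.one_mem _)
          exact_mod_cast this
  have hnonroot_bound : ∑ γ ∈ u.filter (fun γ => ¬ γ.coset = QuotientGroup.mk 1), f γ
      ≤ tsum g := by
    set u' := u.filter (fun γ => ¬ γ.coset = QuotientGroup.mk 1) with hu'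
    rw [← Finset.sum_fiberwise_of_maps_to
      (g := F) (t := u'.image F) (fun γ hγ => Finset.mem_image_of_mem F hγ) f]
    have inner : ∀ m ∈ u'.image F, ∑ γ ∈ u'.filter (fun γ => F γ = m), f γ ≤ g m := by
      intro m _
      have hval : ∀ γ ∈ u'.filter (fun γ => F γ = m), f γ = (m : ℝ) ^ (-s) := by
        intro γ hγ
        simp only [hfdef]
        rw [(Finset.mem_filter.1 hγ).2]
      rw [Finset.sum_congr rfl hval, Finset.sum_const, nsmul_eq_mul]
      have hcard := fiber_card hn F hF m (u'.filter (fun γ => F γ = m))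
        (fun γ hγ => (Finset.mem_filter.1 (Finset.mem_filter.1 hγ).1).2)
        (fun γ hγ => (Finset.mem_filter.1 hγ).2)
      have hcast : ((u'.filter (fun γ => F γ = m)).card : ℝ)
          ≤ (n : ℝ) ^ 3 * ((m : ℝ) + 1) ^ (n - 2) := by
        calc ((u'.filter (fun γ => F γ = m)).card : ℝ)
            ≤ ((n ^ 3 * (m + 1) ^ (n - 2) : ℕ) : ℝ) := by exact_mod_cast hcard
          _ = (n : ℝ) ^ 3 * ((m : ℝ) + 1) ^ (n - 2) := by push_cast; ring
      exact mul_le_mul_of_nonneg_right hcast (Real.rpow_nonneg (Nat.cast_nonneg _) _)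
    calc ∑ m ∈ u'.image F, ∑ γ ∈ u'.filter (fun γ => F γ = m), f γ
        ≤ ∑ m ∈ u'.image F, g m := Finset.sum_le_sum inner
      _ ≤ tsum g := Summable.sum_le_tsum _ (fun m _ => hgnonneg m) hgsum
  exact add_le_add hroot_bound hnonroot_bound

end MarkoffHurwitz
end
end

section
/- Let μ, σ, x ∈ ℂ and let λ ∈ ℂ be a root of λ² − xλ + 1 = 0 with |λ| ≥ 1 (so λ + λ⁻¹ = x). Let (yₘ)_{m∈ℤ} be a sequence of complex numbers satisfying y_{m−1} + y_{m+1} = x·yₘ and yₘ² + y_{m+1}² + σ = x·yₘ·y_{m+1} + μ for all m ∈ ℤ. Then: (1) if σ = μ, then yₘ = y₀λᵐ for all m or yₘ = y₀λ^{−m} for all m; (2) if x ∉ [−2,2] and σ ≠ μ, then |yₘ| grows exponentially as |m| → ∞, i.e. there exist constants c > 1 and C > 0 with |yₘ| ≥ C·c^{|m|} for all sufficiently large |m|; (3) if x ∈ (−2,2), then the sequence (|yₘ|) is bounded; (4) if x = 2, then there exists w ∈ ℂ with w² = μ − σ and yₘ = y₀ + m·w for all m; (5) if x = −2, then there exists w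 ∈ ℂ with w² = μ − σ and yₘ = (−1)ᵐ(y₀ + m·w) for all m. -/
/-- Uniqueness for the second-order linear recurrence on ℤ. -/
private lemma rec_unique (x : ℂ) (y g : ℤ → ℂ)
    (hy : ∀ m : ℤ, y (m - 1) + y (m + 1) = x * y m)
    (hg : ∀ m : ℤ, g (m - 1) + g (m + 1) = x * g m)
    (h0 : y 0 = g 0) (h1 : y 1 = g 1) : ∀ m, y m = g m := by
  have key : ∀ m : ℤ, y m = g m ∧ y (m + 1) = g (m + 1) := by
    intro m
    induction m using Int.induction_on with
    | zero => exact ⟨h0, by norm_num [h1]⟩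
    | succ i ih =>
      refine ⟨ih.2, ?_⟩
      have h2 := hy ((i : ℤ) + 1); have h3 := hg ((i : ℤ) + 1)
      norm_num at h2 h3 ⊢
      linear_combination h2 - h3 - ih.1 + x * ih.2
    | pred i ih =>
      constructor
      · have h2 := hy (-(i : ℤ)); have h3 := hg (-(i : ℤ))
        have e : (-(i:ℤ) - 1 : ℤ) = -i - 1 := by ring
        linear_combination h2 - h3 - ih.2 + x * ih.1
      · have e : (-(i:ℤ) - 1 + 1 : ℤ) = -i := by ring
        rw [e]; exact ih.1
  exact fun m => (key m).1

/-- The two-term geometric sequence satisfies the recurrence. -/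
private lemma gen_sol (x l : ℂ) (hl0 : l ≠ 0) (hx : x = l + l⁻¹) (A B : ℂ) :
    ∀ m : ℤ, (A * l ^ (m - 1) + B * l ^ (-(m - 1))) + (A * l ^ (m + 1) + B * l ^ (-(m + 1)))
      = x * (A * l ^ m + B * l ^ (-m)) := by
  intro m
  have hm : l ^ m ≠ 0 := zpow_ne_zero _ hl0
  have e1 : l ^ (m - 1) = l ^ m * l⁻¹ := by
    rw [zpow_sub₀ hl0, zpow_one]; rfl
  have e2 : l ^ (m + 1) = l ^ m * l := by rw [zpow_add₀ hl0, zpow_one]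
  have e3 : l ^ (-(m - 1)) = (l ^ m)⁻¹ * l := by
    rw [neg_sub, zpow_sub₀ hl0, zpow_one, div_eq_mul_inv, mul_comm]
  have e4 : l ^ (-(m + 1)) = (l ^ m)⁻¹ * l⁻¹ := by
    rw [neg_add, zpow_add₀ hl0, zpow_neg, zpow_neg, zpow_one]
  rw [e1, e2, e3, e4, zpow_neg, hx]
  field_simp
  ring

private lemma lower_bound (A B l : ℂ) (hA : A ≠ 0) (hB : B ≠ 0)
    (hc : 1 < ‖l‖) (N : ℕ)
    (hN : ‖B‖ / (‖A‖ - min (‖A‖) (‖B‖) / 2)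
        < ‖l‖ ^ N) :
    ∀ m : ℤ, (N : ℤ) ≤ m →
      min (‖A‖) (‖B‖) / 2 * ‖l‖ ^ m
        ≤ ‖A * l ^ m + B * l ^ (-m)‖ := by
  intro m hm
  set a := ‖A‖ with ha'
  set b := ‖B‖ with hb'
  set c := ‖l‖ with hc'
  set C := min a b / 2 with hC'
  have ha : 0 < a := norm_pos_iff.mpr hA
  have hb : 0 < b := norm_pos_iff.mpr hB
  have hmin : 0 < min a b := lt_min ha hb
  have hC : 0 < C := by rw [hC']; linarith
  have haC : 0 < a - C := by
    have h1 : min a b ≤ a := min_le_left _ _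
    rw [hC']; linarith
  have hm0 : (0 : ℤ) ≤ m := le_trans (Int.ofNat_nonneg N) hm
  have hcm : (c : ℝ) ^ (N : ℤ) ≤ c ^ m := by gcongr; exact hc.le
  have hNm : b / (a - C) < c ^ m := by
    calc b / (a - C) < c ^ N := hN
    _ = c ^ (N : ℤ) := by rw [zpow_natCast]
    _ ≤ c ^ m := hcm
  have hblt : b < (a - C) * c ^ m := by
    rwa [div_lt_iff₀ haC, mul_comm] at hNm
  have hinv : c ^ (-m) ≤ 1 := by
    have h2 : c ^ (-m) ≤ c ^ (0 : ℤ) := by gcongr <;> linarith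
    simpa using h2
  have hbinv : ‖B * l ^ (-m)‖ ≤ b := by
    rw [norm_mul, norm_zpow]
    calc b * c ^ (-m) ≤ b * 1 := by gcongr
    _ = b := mul_one b
  have hAl : ‖A * l ^ m‖ = a * c ^ m := by rw [norm_mul, norm_zpow]
  have h' : ‖(A * l ^ m + B * l ^ (-m)) - B * l ^ (-m)‖
      ≤ ‖A * l ^ m + B * l ^ (-m)‖ + ‖B * l ^ (-m)‖ := by
    simpa [sub_eq_add_neg] using norm_add_le (A * l ^ m + B * l ^ (-m)) (-(B * l ^ (-m)))
  have e : (A * l ^ m + B * l ^ (-m)) - B * l ^ (-m) = A * l ^ m := by ring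
  rw [e, hAl] at h'
  have htri : a * c ^ m ≤ ‖A * l ^ m + B * l ^ (-m)‖ + b := by linarith
  have hexp : (a - C) * c ^ m = a * c ^ m - C * c ^ m := by ring
  linarith


/-- Growth of the values of a `μ`-Hurwitz map along an alternating geodesic.
`x = φ(γ)` is the extended Hurwitz value and `σ = σ(γ)` the square sum weight;
`(yₘ)` satisfies the edge relations `y_{m−1} + y_{m+1} = x·yₘ` and the vertex relations
`yₘ² + y_{m+1}² + σ = x·yₘ·y_{m+1} + μ`, and `l` is a root of `l² − x·l + 1 = 0` with `|l| ≥ 1`. -/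
theorem growth_along_geodesic (μ σ x : ℂ) (l : ℂ)
    (hroot : l ^ 2 - x * l + 1 = 0) (hl : 1 ≤ ‖l‖)
    (y : ℤ → ℂ)
    (hrec : ∀ m : ℤ, y (m - 1) + y (m + 1) = x * y m)
    (hvert : ∀ m : ℤ, y m ^ 2 + y (m + 1) ^ 2 + σ = x * y m * y (m + 1) + μ) :
    -- (1)
    (σ = μ → (∀ m : ℤ, y m = y 0 * l ^ m) ∨ (∀ m : ℤ, y m = y 0 * l ^ (-m))) ∧
    -- (2)
    ((x ∉ (fun r : ℝ => (r : ℂ)) '' Set.Icc (-2 : ℝ) 2) → σ ≠ μ →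
      ∃ c : ℝ, 1 < c ∧ ∃ C : ℝ, 0 < C ∧ ∃ M : ℕ, ∀ m : ℤ, (M : ℤ) ≤ |m| →
        C * c ^ |m| ≤ ‖y m‖) ∧
    -- (3)
    ((∃ r : ℝ, -2 < r ∧ r < 2 ∧ x = (r : ℂ)) → ∃ B : ℝ, ∀ m : ℤ, ‖y m‖ ≤ B) ∧
    -- (4)
    (x = 2 → ∃ w : ℂ, w ^ 2 = μ - σ ∧ ∀ m : ℤ, y m = y 0 + (m : ℂ) * w) ∧
    -- (5)
    (x = -2 → ∃ w : ℂ, w ^ 2 = μ - σ ∧ ∀ m : ℤ, y m = (-1) ^ m * (y 0 + (m : ℂ) * w)) := by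
  have hl0 : l ≠ 0 := by
    intro h; rw [h] at hroot; norm_num at hroot
  have hx : x = l + l⁻¹ := by
    field_simp
    linear_combination -hroot
  have hv0 := hvert 0
  norm_num at hv0
  -- part (4)
  have part4 : x = 2 → ∃ w : ℂ, w ^ 2 = μ - σ ∧ ∀ m : ℤ, y m = y 0 + (m : ℂ) * w := by
    intro h2
    refine ⟨y 1 - y 0, by rw [h2] at hv0; linear_combination hv0, ?_⟩
    have := rec_unique x y (fun m => y 0 + (m : ℂ) * (y 1 - y 0)) hrec ?_ ?_ ?_
    · exact this
    · intro m; rw [h2]; push_cast; ring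
    · norm_num
    · push_cast; ring
  -- part (5)
  have part5 : x = -2 → ∃ w : ℂ, w ^ 2 = μ - σ ∧
      ∀ m : ℤ, y m = (-1) ^ m * (y 0 + (m : ℂ) * w) := by
    intro h2
    refine ⟨-(y 1 + y 0), by rw [h2] at hv0; linear_combination hv0, ?_⟩
    have := rec_unique x y (fun m => (-1) ^ m * (y 0 + (m : ℂ) * (-(y 1 + y 0)))) hrec ?_ ?_ ?_
    · exact this
    · intro m
      have hm1 : ((-1 : ℂ)) ≠ 0 := by norm_num
      show (-1 : ℂ) ^ (m - 1) * _ + (-1 : ℂ) ^ (m + 1) * _ = x * ((-1 : ℂ) ^ m * _)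
      rw [zpow_sub₀ hm1, zpow_add₀ hm1, zpow_one, h2]
      push_cast
      ring_nf
    · norm_num
    · push_cast; ring
  refine ⟨?_, ?_, ?_, part4, part5⟩
  · -- part 1
    intro hσμ
    by_cases hsq : l ^ 2 = 1
    · have hl1 : l = 1 ∨ l = -1 := by
        have h : (l - 1) * (l + 1) = 0 := by linear_combination hsq
        rcases mul_eq_zero.mp h with h | h
        · left; linear_combination h
        · right; linear_combination h
      left
      rcases hl1 with h1 | h1
      · have hx2 : x = 2 := by rw [h1] at hroot; linear_combination -hroot
        obtain ⟨w, hw2, hw⟩ := part4 hx2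
        have hw0 : w = 0 := by
          have : w ^ 2 = 0 := by rw [hw2, hσμ, sub_self]
          exact pow_eq_zero_iff (n := 2) (by norm_num) |>.mp this
        intro m
        rw [hw m, hw0, h1, one_zpow]
        ring
      · have hx2 : x = -2 := by rw [h1] at hroot; linear_combination hroot
        obtain ⟨w, hw2, hw⟩ := part5 hx2
        have hw0 : w = 0 := by
          have : w ^ 2 = 0 := by rw [hw2, hσμ, sub_self]
          exact pow_eq_zero_iff (n := 2) (by norm_num) |>.mp this
        intro m
        rw [hw m, hw0, h1]
        ring
    · -- generic case
      have hd0 : (2 * l - x : ℂ) ≠ 0 := by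
        intro h
        apply hsq
        have hx2l : x = 2 * l := by linear_combination -h
        rw [hx2l] at hroot
        linear_combination -hroot
      set A : ℂ := (y 1 - y 0 * (x - l)) / (2 * l - x) with hA'
      set B : ℂ := (y 0 * l - y 1) / (2 * l - x) with hB'
      have hAB0 : A + B = y 0 := by rw [hA', hB', ← add_div, div_eq_iff hd0]; ring
      have hAB1 : A * l + B * (x - l) = y 1 := by
        rw [hA', hB', div_mul_eq_mul_div, div_mul_eq_mul_div, ← add_div, div_eq_iff hd0]; ring
      have hinv : l⁻¹ = x - l := by
        field_simp
        linear_combination hroot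
      have hABinv : A * l + B * l⁻¹ = y 1 := by rw [hinv]; exact hAB1
      have hy_eq : ∀ m : ℤ, y m = A * l ^ m + B * l ^ (-m) := by
        apply rec_unique x y _ hrec (gen_sol x l hl0 hx A B)
        · norm_num [hAB0]
        · norm_num [hABinv]
      have hprod : A * B = 0 := by
        rw [← hAB0, ← hAB1, hσμ] at hv0
        have hkey : A * B * (2 * l - x) ^ 2 = 0 := by
          linear_combination -hv0 + (A + B) ^ 2 * hroot
        rcases mul_eq_zero.mp hkey with h | h
        · exact h
        · exact absurd (pow_eq_zero_iff (n := 2) (by norm_num) |>.mp h) hd0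
      rcases mul_eq_zero.mp hprod with h | h
      · right
        intro m
        rw [hy_eq m, h, ← hAB0, h]
        ring
      · left
        intro m
        rw [hy_eq m, h, ← hAB0, h]
        ring
  · -- part 2
    intro hxnot hσμ
    have habs : 1 < ‖l‖ := by
      rcases lt_or_eq_of_le hl with h | h
      · exact h
      · exfalso
        apply hxnot
        have hns : Complex.normSq l = 1 := by
          have h2 : ‖l‖ = 1 := h.symm
          have := Complex.sq_norm l
          rw [h2] at this; simpa using this.symm
        have hinv : l⁻¹ = (starRingEnd ℂ) l := by
          rw [Complex.inv_def, hns]; simp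
        have hxre : x = ((2 * l.re : ℝ) : ℂ) := by
          rw [hx, hinv, Complex.add_conj]
        have hre : |l.re| ≤ 1 := by
          have h3 := Complex.abs_re_le_norm l
          rw [← h] at h3; exact h3
        rw [abs_le] at hre
        exact ⟨2 * l.re, ⟨by linarith, by linarith⟩, hxre.symm⟩
    have hsq : l ^ 2 ≠ 1 := by
      intro h
      have h2 : ‖l‖ ^ 2 = 1 := by
        rw [← norm_pow, h]; simp
      nlinarith
    have hd0 : (2 * l - x : ℂ) ≠ 0 := by
      intro h
      apply hsq
      have hx2l : x = 2 * l := by linear_combination -h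
      rw [hx2l] at hroot
      linear_combination -hroot
    set A : ℂ := (y 1 - y 0 * (x - l)) / (2 * l - x) with hA'
    set B : ℂ := (y 0 * l - y 1) / (2 * l - x) with hB'
    have hAB0 : A + B = y 0 := by rw [hA', hB', ← add_div, div_eq_iff hd0]; ring
    have hAB1 : A * l + B * (x - l) = y 1 := by
      rw [hA', hB', div_mul_eq_mul_div, div_mul_eq_mul_div, ← add_div, div_eq_iff hd0]; ring
    have hinv : l⁻¹ = x - l := by
      field_simp
      linear_combination hroot
    have hABinv : A * l + B * l⁻¹ = y 1 := by rw [hinv]; exact hAB1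
    have hy_eq : ∀ m : ℤ, y m = A * l ^ m + B * l ^ (-m) := by
      apply rec_unique x y _ hrec (gen_sol x l hl0 hx A B)
      · norm_num [hAB0]
      · norm_num [hABinv]
    have hkey : A * B * (2 * l - x) ^ 2 = σ - μ := by
      rw [← hAB0, ← hAB1] at hv0
      linear_combination -hv0 + (A + B) ^ 2 * hroot
    have hA0 : A ≠ 0 := by
      intro h
      apply hσμ
      rw [h] at hkey
      simp at hkey
      linear_combination -hkey
    have hB0 : B ≠ 0 := by
      intro h
      apply hσμ
      rw [h] at hkey
      simp at hkey
      linear_combination -hkey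
    refine ⟨‖l‖, habs, min (‖A‖) (‖B‖) / 2, ?_, ?_⟩
    · have ha := norm_pos_iff.mpr hA0
      have hb := norm_pos_iff.mpr hB0
      have := lt_min ha hb
      linarith
    obtain ⟨N, hN⟩ := pow_unbounded_of_one_lt
      (max (‖B‖ / (‖A‖ - min (‖A‖) (‖B‖) / 2))
           (‖A‖ / (‖B‖ - min (‖A‖) (‖B‖) / 2))) habs
    refine ⟨N, fun m hm => ?_⟩
    rcases le_or_gt 0 m with hm0 | hm0
    · rw [abs_of_nonneg hm0] at hm ⊢
      have hlb := lower_bound A B l hA0 hB0 habs N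
        (lt_of_le_of_lt (le_max_left _ _) hN) m hm
      rw [hy_eq m]
      exact hlb
    · rw [abs_of_neg hm0] at hm ⊢
      have h2 : ‖A‖ /
          (‖B‖ - min (‖B‖) (‖A‖) / 2) < ‖l‖ ^ N := by
        rw [min_comm]
        exact lt_of_le_of_lt (le_max_right _ _) hN
      have hlb := lower_bound B A l hB0 hA0 habs N h2 (-m) hm
      rw [min_comm] at hlb
      have e : B * l ^ (-m) + A * l ^ (-(-m)) = y m := by
        rw [hy_eq m, neg_neg]; ring
      rw [e] at hlb
      exact hlb
  · -- part 3
    rintro ⟨r, hr1, hr2, hxr⟩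
    have hcroot : (starRingEnd ℂ) l ^ 2 - x * (starRingEnd ℂ) l + 1 = 0 := by
      have h := congrArg (starRingEnd ℂ) hroot
      simpa [hxr, map_sub, map_add, map_mul, map_pow, Complex.conj_ofReal] using h
    have hfact : ((starRingEnd ℂ) l - l) * ((starRingEnd ℂ) l - (x - l)) = 0 := by
      linear_combination hcroot - hroot
    have habs1 : ‖l‖ = 1 := by
      rcases mul_eq_zero.mp hfact with h | h
      · exfalso
        have hlre : ((l.re : ℝ) : ℂ) = l := Complex.conj_eq_iff_re.mp (by linear_combination h)
        set t := l.re with ht'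
        have ht : t ^ 2 - r * t + 1 = 0 := by
          have h3 := hroot
          rw [← hlre, hxr] at h3
          exact_mod_cast h3
        nlinarith [sq_nonneg (2 * t - r),
          mul_pos (by linarith : (0:ℝ) < 2 - r) (by linarith : (0:ℝ) < 2 + r)]
      · have hmc : l * (starRingEnd ℂ) l = 1 := by linear_combination l * h - hroot
        have hns : Complex.normSq l = 1 := by
          have h4 := Complex.mul_conj l
          rw [hmc] at h4
          exact_mod_cast h4.symm
        rw [Complex.norm_def, hns, Real.sqrt_one]
    have hsq : l ^ 2 ≠ 1 := by
      intro h
      have hl1 : l = 1 ∨ l = -1 := by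
        have hf : (l - 1) * (l + 1) = 0 := by linear_combination h
        rcases mul_eq_zero.mp hf with h2 | h2
        · left; linear_combination h2
        · right; linear_combination h2
      rcases hl1 with h1 | h1
      · have hx2 : x = 2 := by rw [h1] at hroot; linear_combination -hroot
        rw [hx2] at hxr
        have : r = 2 := by exact_mod_cast hxr.symm
        linarith
      · have hx2 : x = -2 := by rw [h1] at hroot; linear_combination hroot
        rw [hx2] at hxr
        have : r = -2 := by exact_mod_cast hxr.symm
        linarith
    have hd0 : (2 * l - x : ℂ) ≠ 0 := by
      intro h
      apply hsq
      have hx2l : x = 2 * l := by linear_combination -h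
      rw [hx2l] at hroot
      linear_combination -hroot
    set A : ℂ := (y 1 - y 0 * (x - l)) / (2 * l - x) with hA'
    set B : ℂ := (y 0 * l - y 1) / (2 * l - x) with hB'
    have hAB0 : A + B = y 0 := by rw [hA', hB', ← add_div, div_eq_iff hd0]; ring
    have hinv : l⁻¹ = x - l := by
      field_simp
      linear_combination hroot
    have hABinv : A * l + B * l⁻¹ = y 1 := by
      rw [hinv, hA', hB', div_mul_eq_mul_div, div_mul_eq_mul_div, ← add_div, div_eq_iff hd0]; ring
    have hy_eq : ∀ m : ℤ, y m = A * l ^ m + B * l ^ (-m) := by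
      apply rec_unique x y _ hrec (gen_sol x l hl0 hx A B)
      · norm_num [hAB0]
      · norm_num [hABinv]
    refine ⟨‖A‖ + ‖B‖, fun m => ?_⟩
    rw [hy_eq m]
    calc ‖A * l ^ m + B * l ^ (-m)‖
        ≤ ‖A * l ^ m‖ + ‖B * l ^ (-m)‖ := norm_add_le _ _
      _ = ‖A‖ + ‖B‖ := by
          rw [norm_mul, norm_mul, norm_zpow, norm_zpow, habs1, one_zpow, one_zpow,
            mul_one, mul_one]
end

section
/- Let n ≥ 3 and let x ∈ ℂ with |x|^{n−2} > 2. Then the diagonal point (x, x, …, x) ∈ ℂⁿ lies in the Bowditch domain 𝒟. -/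
open scoped BigOperators

noncomputable section

namespace MarkoffHurwitz

/- ===== auxiliary lemmas for diagonal_in_bowditch ===== -/

lemma bperm_apply (n : ℕ) (i : Fin n) (y : Fin n → ℂ) : bperm n i y = bmap n i y := rfl

/-- Every element of `Γₙ` is a product of generators. -/
lemma exists_list {n : ℕ} (g : Gam n) : ∃ l : List (Fin n), g = (l.map gen).prod := by
  obtain ⟨w, rfl⟩ := PresentedGroup.mk_surjective (MHrels n) g
  induction w with
  | C1 => exact ⟨[], by simp⟩
  | of i => exact ⟨[i], by simp [gen, PresentedGroup.of]⟩
  | inv_of i _ =>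
    refine ⟨[i], ?_⟩
    rw [map_inv]
    have h1 : (PresentedGroup.mk (MHrels n)) (FreeGroup.of i) = gen i := rfl
    rw [h1, gen_inv]; simp
  | mul u v ihu ihv =>
    obtain ⟨lu, hu⟩ := ihu
    obtain ⟨lv, hv⟩ := ihv
    exact ⟨lu ++ lv, by rw [map_mul, hu, hv, List.map_append, List.prod_append]⟩

/-- Every product of generators equals the product over a reduced list. -/
lemma exists_reduced {n : ℕ} (l : List (Fin n)) :
    ∃ l' : List (Fin n), List.Chain' (· ≠ ·) l' ∧
      ((l.map gen).prod : Gam n) = (l'.map gen).prod := by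
  induction l with
  | nil => exact ⟨[], List.isChain_nil, rfl⟩
  | cons a t ih =>
    obtain ⟨t', hc, hp⟩ := ih
    match t', hc with
    | [], _ => exact ⟨[a], List.isChain_singleton a, by simp [List.map_cons, List.prod_cons, hp]⟩
    | b :: s, hc =>
      by_cases hab : a = b
      · refine ⟨s, hc.tail, ?_⟩
        subst hab
        simp only [List.map_cons, List.prod_cons] at hp ⊢
        rw [hp, ← mul_assoc, gen_mul_self, one_mul]
      · refine ⟨a :: b :: s, List.isChain_cons.mpr ⟨by simpa using hab, hc⟩, ?_⟩
        simp only [List.map_cons, List.prod_cons] at hp ⊢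
        rw [hp]

/-- The point of the Hurwitz orbit obtained by applying the involutions along a list. -/
def Fpt (n : ℕ) (x : ℂ) (l : List (Fin n)) : Fin n → ℂ :=
  l.foldr (fun k y => bmap n k y) (fun _ => x)

lemma act_prod (n : ℕ) (x : ℂ) (l : List (Fin n)) :
    act n ((l.map gen).prod) (fun _ => x) = Fpt n x l := by
  induction l with
  | nil => simp [Fpt]
  | cons k t ih =>
    simp only [List.map_cons, List.prod_cons, map_mul, Equiv.Perm.mul_apply, act_gen]
    rw [ih]
    rfl

/-- Core growth step: applying `bmap m` to a point all of whose coordinates are large,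
with `m`-th coordinate "small". -/
lemma growth_step (n : ℕ) (x : ℂ) (hn : 3 ≤ n) (hx : 2 < ‖x‖ ^ (n - 2))
    (z : Fin n → ℂ) (m : Fin n)
    (hz : ∀ j, ‖x‖ ≤ ‖z j‖)
    (hsm : 2 * ‖z m‖ ≤ ∏ j ∈ Finset.univ.erase m, ‖z j‖) :
    (∀ j, ‖x‖ ≤ ‖bmap n m z j‖) ∧
    (∀ k, k ≠ m →
      2 * ‖bmap n m z k‖ ≤
        ∏ j ∈ Finset.univ.erase k, ‖bmap n m z j‖) := by
  set r := ‖x‖ with hr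
  have hr0 : 0 ≤ r := norm_nonneg x
  have h2 : (2 : ℝ) ≤ r ^ (n - 2) := le_of_lt hx
  set P : ℝ := ∏ j ∈ Finset.univ.erase m, ‖z j‖ with hP
  have hcard : (Finset.univ.erase m).card = n - 1 := by
    rw [Finset.card_erase_of_mem (Finset.mem_univ m), Finset.card_univ, Fintype.card_fin]
  have hn1 : n - 1 = (n - 2) + 1 := by omega
  have hPge : r ^ (n - 2) * r ≤ P := by
    calc r ^ (n - 2) * r = r ^ (n - 1) := by rw [hn1, pow_succ]
    _ = ∏ _j ∈ Finset.univ.erase m, r := by rw [Finset.prod_const, hcard]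
    _ ≤ P := Finset.prod_le_prod (fun _ _ => hr0) (fun j _ => hz j)
  have hP2r : 2 * r ≤ P := le_trans (mul_le_mul_of_nonneg_right h2 hr0) hPge
  have hym : bmap n m z m = (∏ j ∈ Finset.univ.erase m, z j) - z m :=
    bmap_apply_same _ m z
  have habsP : ‖∏ j ∈ Finset.univ.erase m, z j‖ = P := by
    rw [hP]; exact norm_prod _ _
  have hymge : P - ‖z m‖ ≤ ‖bmap n m z m‖ := by
    rw [hym, ← habsP]
    exact norm_sub_norm_le _ _
  have hym2 : P ≤ 2 * ‖bmap n m z m‖ := by linarith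
  have hymr : r ≤ ‖bmap n m z m‖ := by linarith
  constructor
  · intro j
    rcases eq_or_ne j m with rfl | hj
    · exact hymr
    · rw [bmap_apply_ne n m z hj]; exact hz j
  · intro k hkm
    have hk : bmap n m z k = z k := bmap_apply_ne n m z hkm
    have hmem : m ∈ Finset.univ.erase k := Finset.mem_erase.mpr ⟨Ne.symm hkm, Finset.mem_univ m⟩
    have hsplit : ∏ j ∈ Finset.univ.erase k, ‖bmap n m z j‖
        = ‖bmap n m z m‖ *
          ∏ j ∈ (Finset.univ.erase k).erase m, ‖bmap n m z j‖ :=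
      (Finset.mul_prod_erase _ _ hmem).symm
    have hQeq : ∏ j ∈ (Finset.univ.erase k).erase m, ‖bmap n m z j‖
        = ∏ j ∈ (Finset.univ.erase k).erase m, ‖z j‖ := by
      refine Finset.prod_congr rfl fun j hj => ?_
      rw [bmap_apply_ne n m z (Finset.ne_of_mem_erase hj)]
    set Q : ℝ := ∏ j ∈ (Finset.univ.erase k).erase m, ‖z j‖ with hQ
    have hcardQ : ((Finset.univ.erase k).erase m).card = n - 2 := by
      rw [Finset.card_erase_of_mem hmem, Finset.card_erase_of_mem (Finset.mem_univ k),
        Finset.card_univ, Fintype.card_fin]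
      omega
    have hQge : r ^ (n - 2) ≤ Q := by
      calc r ^ (n - 2) = ∏ _j ∈ (Finset.univ.erase k).erase m, r := by
            rw [Finset.prod_const, hcardQ]
      _ ≤ Q := Finset.prod_le_prod (fun _ _ => hr0) (fun j _ => hz j)
    have hQ2 : (2 : ℝ) ≤ Q := le_trans h2 hQge
    have hmemk : k ∈ Finset.univ.erase m := Finset.mem_erase.mpr ⟨hkm, Finset.mem_univ k⟩
    have hPsplit : P = ‖z k‖ *
        ∏ j ∈ (Finset.univ.erase m).erase k, ‖z j‖ := by
      rw [hP]; exact (Finset.mul_prod_erase _ _ hmemk).symm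
    have hcomm : (Finset.univ.erase m).erase k = (Finset.univ.erase k).erase m :=
      Finset.erase_right_comm
    rw [hcomm] at hPsplit
    have hzk0 : 0 ≤ ‖z k‖ := norm_nonneg _
    have hzkym : ‖z k‖ ≤ ‖bmap n m z m‖ := by nlinarith
    rw [hk, hsplit, hQeq]
    calc 2 * ‖z k‖ ≤ ‖z k‖ * Q := by nlinarith
    _ ≤ ‖bmap n m z m‖ * Q :=
        mul_le_mul_of_nonneg_right hzkym (le_trans (by norm_num) hQ2)

/-- The main invariant along reduced words. -/
lemma invariant (n : ℕ) (x : ℂ) (hn : 3 ≤ n) (hx : 2 < ‖x‖ ^ (n - 2)) :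
    ∀ l : List (Fin n), List.Chain' (· ≠ ·) l →
      (∀ j, ‖x‖ ≤ ‖Fpt n x l j‖) ∧
      (∀ k : Fin n, (∀ m ∈ l.head?, k ≠ m) →
        2 * ‖Fpt n x l k‖ ≤
          ∏ j ∈ Finset.univ.erase k, ‖Fpt n x l j‖) := by
  intro l
  induction l with
  | nil =>
    intro _
    constructor
    · intro j; exact le_refl _
    · intro k _
      have hFpt : ∀ j, Fpt n x [] j = x := fun j => rfl
      have hcard : (Finset.univ.erase k).card = n - 1 := by
        rw [Finset.card_erase_of_mem (Finset.mem_univ k), Finset.card_univ, Fintype.card_fin]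
      have hprod : ∏ j ∈ Finset.univ.erase k, ‖Fpt n x [] j‖
          = ‖x‖ ^ (n - 1) := by
        simp only [hFpt]; rw [Finset.prod_const, hcard]
      rw [hprod, hFpt]
      have hr0 : 0 ≤ ‖x‖ := norm_nonneg x
      have hn1 : n - 1 = (n - 2) + 1 := by omega
      rw [hn1, pow_succ]
      nlinarith
  | cons m t ih =>
    intro hc
    rw [List.Chain', List.isChain_cons] at hc
    obtain ⟨hhead, hct⟩ := hc
    obtain ⟨hz, hsmall⟩ := ih hct
    have hsm := hsmall m (fun m' hm' => hhead m' hm')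
    have hF : Fpt n x (m :: t) = bmap n m (Fpt n x t) := rfl
    obtain ⟨c1, c2⟩ := growth_step n x hn hx (Fpt n x t) m hz hsm
    rw [hF]
    exact ⟨c1, fun k hk => c2 k (hk m (by simp))⟩

/-- Every coordinate of every orbit point of the diagonal has modulus at least `|x|`. -/
lemma orbit_bound (n : ℕ) (x : ℂ) (hn : 3 ≤ n) (hx : 2 < ‖x‖ ^ (n - 2))
    (g : Gam n) (j : Fin n) :
    ‖x‖ ≤ ‖act n g (fun _ => x) j‖ := by
  obtain ⟨l, rfl⟩ := exists_list g
  obtain ⟨l', hc, hp⟩ := exists_reduced l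
  rw [hp, act_prod]
  exact (invariant n x hn hx l' hc).1 j


lemma offPair_card {n : ℕ} (s : Sym2 (Fin n)) (h : ¬ s.IsDiag) :
    (offPair s).card = n - 2 := by
  induction s using Sym2.ind with
  | _ i j =>
    rw [Sym2.mk_isDiag_iff] at h
    have he : offPair s(i, j) = ({i, j} : Finset (Fin n))ᶜ := by
      ext k
      simp [offPair, Sym2.mem_iff, not_or]
    rw [he, Finset.card_compl, Finset.card_insert_of_notMem (by simpa using h),
      Finset.card_singleton, Fintype.card_fin]

/-- If `|x|^{n−2} > 2` then the diagonal point `(x,…,x)` lies in the Bowditch domain. -/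
theorem diagonal_in_bowditch (n : ℕ) (hn : 3 ≤ n) (x : ℂ)
    (hx : 2 < ‖x‖ ^ (n - 2)) :
    (fun _ : Fin n => x) ∈ BD n := by
  have key : ∀ γ : AltGeo n,
      ‖x‖ ^ (n - 2) ≤ ‖phiA n (fun _ => x) γ‖ := by
    intro γ
    obtain ⟨g, hg⟩ := Quotient.exists_rep γ.coset
    have hphi : phiA n (fun _ => x) γ = phiRep n (fun _ => x) γ.pair g := by
      unfold phiA
      rw [← hg]
      rfl
    rw [hphi]
    unfold phiRep
    rw [norm_prod]
    calc ‖x‖ ^ (n - 2)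
        = ∏ _k ∈ offPair γ.pair, ‖x‖ := by
          rw [Finset.prod_const, offPair_card γ.pair γ.nd]
      _ ≤ ∏ k ∈ offPair γ.pair, ‖act n g⁻¹ (fun _ => x) k‖ :=
          Finset.prod_le_prod (fun _ _ => norm_nonneg x)
            (fun k _ => orbit_bound n x hn hx g⁻¹ k)
  simp only [BD, Set.mem_setOf_eq]
  constructor
  · rintro γ ⟨t, ht, heq⟩
    have h1 := key γ
    rw [← heq, Complex.norm_real, Real.norm_eq_abs] at h1
    have h2 : |t| ≤ 2 := abs_le.mpr ⟨ht.1, ht.2⟩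
    linarith
  · refine ⟨(2 + ‖x‖ ^ (n - 2)) / 2, by linarith, ?_⟩
    convert Set.finite_empty
    rw [Set.eq_empty_iff_forall_notMem]
    intro γ hγ
    have h1 := key γ
    have h2 : ‖phiA n (fun _ => x) γ‖ ≤ (2 + ‖x‖ ^ (n - 2)) / 2 := hγ
    linarith


end MarkoffHurwitz
end
end
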